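/- arXiv:1411.4586 — 6 statements merged into one kernel-verified Lean document; each statement's English description precedes it below -/
import Mathlib

section
/- For every z > 0 and every b_max > 0, the integral from 0 to b_max of b · exp(-z/(4b²)) db equals (1/8) · (4 b_max² · exp(-z/(4 b_max²)) + z · Ei(-z/(4 b_max²))). -/
open MeasureTheory Real Filter

/-- `negEi z` is the exponential integral `Ei(-z)`, defined for `z > 0` by
`Ei(-z) = -∫_z^∞ (e^{-t}/t) dt`. -/
noncomputable def negEi (z : ℝ) : ℝ := -∫ t in Set.Ioi z, Real.exp (-t) / t

lemma integrableOn_exp_div {u : ℝ} (hu : 0 < u) :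
    IntegrableOn (fun t => Real.exp (-t) / t) (Set.Ioi u) := by
  have h1 : IntegrableOn (fun t => Real.exp (-t) / u) (Set.Ioi u) := by
    have := (exp_neg_integrableOn_Ioi u (b := 1) one_pos).div_const u
    simpa [IntegrableOn] using this
  refine Integrable.mono h1 ?_ ?_
  · exact ((continuous_exp.comp continuous_neg).continuousOn.div continuous_id.continuousOn
      (fun t ht => ne_of_gt (hu.trans ht))).aestronglyMeasurable measurableSet_Ioi
  · filter_upwards [MeasureTheory.ae_restrict_mem measurableSet_Ioi] with t ht
    have htu : u < t := ht
    have h0 : 0 < t := hu.trans htu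
    rw [Real.norm_eq_abs, Real.norm_eq_abs, abs_div, abs_div, abs_of_pos (Real.exp_pos _),
      abs_of_pos h0, abs_of_pos hu]
    exact div_le_div_of_nonneg_left (Real.exp_pos _).le hu htu.le

lemma negEi_hasDerivAt {u : ℝ} (hu : 0 < u) :
    HasDerivAt negEi (Real.exp (-u) / u) u := by
  set c := u / 2 with hc
  have hc0 : 0 < c := by positivity
  have hcu : c < u := by rw [hc]; linarith
  have key : ∀ v ∈ Set.Ioi c,
      negEi v = negEi c + ∫ t in c..v, Real.exp (-t) / t := by
    intro v hv
    have hcv : c ≤ v := le_of_lt hv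
    have hsplit : (∫ t in Set.Ioi c, Real.exp (-t) / t)
        = (∫ t in Set.Ioc c v, Real.exp (-t) / t)
          + ∫ t in Set.Ioi v, Real.exp (-t) / t := by
      rw [← MeasureTheory.setIntegral_union (Set.Ioc_disjoint_Ioi le_rfl)
        measurableSet_Ioi ((integrableOn_exp_div hc0).mono_set Set.Ioc_subset_Ioi_self)
        ((integrableOn_exp_div hc0).mono_set (Set.Ioi_subset_Ioi hcv)),
        Set.Ioc_union_Ioi_eq_Ioi hcv]
    rw [negEi, negEi, intervalIntegral.integral_of_le hcv, hsplit]
    ring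
  have hint : IntervalIntegrable (fun t => Real.exp (-t) / t) volume c u :=
    (intervalIntegrable_iff_integrableOn_Ioc_of_le hcu.le).2
      ((integrableOn_exp_div hc0).mono_set Set.Ioc_subset_Ioi_self)
  have hcont : ContinuousAt (fun t => Real.exp (-t) / t) u :=
    ((continuous_exp.comp continuous_neg).continuousAt).div continuousAt_id hu.ne'
  have hmeas : StronglyMeasurableAtFilter (fun t => Real.exp (-t) / t) (nhds u) := by
    refine ⟨Set.Ioi c, Ioi_mem_nhds hcu, ?_⟩
    exact ((continuous_exp.comp continuous_neg).continuousOn.div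
      continuous_id.continuousOn (fun t ht => ne_of_gt (hc0.trans ht))).aestronglyMeasurable
      measurableSet_Ioi
  have hD := (intervalIntegral.integral_hasDerivAt_right hint hmeas hcont).const_add (negEi c)
  refine hD.congr_of_eventuallyEq ?_
  filter_upwards [Ioi_mem_nhds hcu] with v hv
  exact key v hv

lemma negEi_tendsto_zero : Tendsto negEi atTop (nhds 0) := by
  have hub : ∀ u : ℝ, 1 ≤ u → -Real.exp (-u) ≤ negEi u ∧ negEi u ≤ 0 := by
    intro u hu
    have hu0 : (0:ℝ) < u := lt_of_lt_of_le one_pos hu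
    have hnn : 0 ≤ ∫ t in Set.Ioi u, Real.exp (-t) / t :=
      MeasureTheory.setIntegral_nonneg measurableSet_Ioi
        (fun t ht => div_nonneg (Real.exp_pos _).le (le_of_lt (hu0.trans ht)))
    have hle : (∫ t in Set.Ioi u, Real.exp (-t) / t) ≤ ∫ t in Set.Ioi u, Real.exp (-t) := by
      refine MeasureTheory.setIntegral_mono_on (integrableOn_exp_div hu0)
        ?_ measurableSet_Ioi ?_
      · simpa using exp_neg_integrableOn_Ioi u (b := 1) one_pos
      · intro t ht
        have h1t : 1 ≤ t := hu.trans (le_of_lt ht)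
        exact div_le_self (Real.exp_pos _).le h1t
    rw [integral_exp_neg_Ioi] at hle
    constructor
    · simpa [negEi] using hle
    · simpa [negEi] using hnn
  have hexp : Tendsto (fun u : ℝ => -Real.exp (-u)) atTop (nhds 0) := by
    simpa using (Real.tendsto_exp_atBot.comp tendsto_neg_atTop_atBot).neg
  refine tendsto_of_tendsto_of_tendsto_of_le_of_le' hexp tendsto_const_nhds ?_ ?_
  · filter_upwards [eventually_ge_atTop (1:ℝ)] with u hu using (hub u hu).1
  · filter_upwards [eventually_ge_atTop (1:ℝ)] with u hu using (hub u hu).2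

theorem integral_b_exp (z bmax : ℝ) (hz : 0 < z) (hb : 0 < bmax) :
    (∫ b in Set.Ioc (0:ℝ) bmax, b * Real.exp (-z / (4 * b^2)))
      = (1/8) * (4 * bmax^2 * Real.exp (-z / (4 * bmax^2))
          + z * negEi (z / (4 * bmax^2))) := by
  set g : ℝ → ℝ := fun b => b * Real.exp (-z / (4 * b ^ 2)) with hg
  set F : ℝ → ℝ := fun b => (1/8) * (4 * b^2 * Real.exp (-z / (4 * b^2))
      + z * negEi (z / (4 * b^2))) with hF
  -- continuity of g
  have hgcont : Continuous g := by
    rw [continuous_iff_continuousAt]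
    intro b
    rcases eq_or_ne b 0 with rfl | hb0
    · have hbd : ∀ x : ℝ, ‖g x‖ ≤ |x| := by
        intro x
        rw [hg]
        simp only [norm_mul, Real.norm_eq_abs, Real.abs_exp]
        calc |x| * Real.exp (-z / (4 * x ^ 2))
            ≤ |x| * 1 := by
              refine mul_le_mul_of_nonneg_left ?_ (abs_nonneg x)
              rw [Real.exp_le_one_iff]
              rcases eq_or_ne x 0 with rfl | hx
              · simp
              · have : 0 < 4 * x ^ 2 := by positivity
                exact le_of_lt (div_neg_of_neg_of_pos (by linarith) this)
          _ = |x| := mul_one _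
      have : Tendsto g (nhds 0) (nhds 0) := by
        refine squeeze_zero_norm hbd ?_
        simpa using (continuous_abs.tendsto (0:ℝ))
      have hg0 : g 0 = 0 := by simp [hg]
      rw [ContinuousAt, hg0]
      exact this
    · have : ContinuousAt (fun x : ℝ => -z / (4 * x ^ 2)) b :=
        continuousAt_const.div (by fun_prop) (by positivity)
      exact continuousAt_id.mul (Real.continuous_exp.continuousAt.comp this)
  -- derivative of F on (0, ∞)
  have hFderiv : ∀ b : ℝ, 0 < b → HasDerivAt F (g b) b := by
    intro b hb0
    have hden : (4 * b ^ 2 : ℝ) ≠ 0 := by positivity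
    have hden' : HasDerivAt (fun x : ℝ => 4 * x ^ 2) (4 * (2 * b)) b := by
      simpa using (hasDerivAt_pow 2 b).const_mul 4
    have h1 : HasDerivAt (fun x : ℝ => -z / (4 * x ^ 2))
        ((0 * (4 * b ^ 2) - (-z) * (4 * (2 * b))) / (4 * b ^ 2) ^ 2) b :=
      (hasDerivAt_const b (-z)).div hden' hden
    have h2 : HasDerivAt (fun x : ℝ => z / (4 * x ^ 2))
        ((0 * (4 * b ^ 2) - z * (4 * (2 * b))) / (4 * b ^ 2) ^ 2) b :=
      (hasDerivAt_const b z).div hden' hden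
    have hexp := h1.exp
    have hterm1 := hden'.mul hexp
    have hu : 0 < z / (4 * b ^ 2) := by positivity
    have hterm2 := (negEi_hasDerivAt hu).comp b h2
    have := ((hterm1.add (hterm2.const_mul z)).const_mul (1/8 : ℝ))
    refine HasDerivAt.congr_deriv (by exact this) ?_
    rw [hg]
    have hexpne : Real.exp (-(z / (4 * b ^ 2))) = Real.exp (-z / (4 * b ^ 2)) := by
      rw [neg_div]
    simp only [Function.comp_def, hexpne]
    field_simp
    ring
  -- interval integrability
  have hgint : ∀ a c : ℝ, IntervalIntegrable g volume a c :=
    fun a c => hgcont.intervalIntegrable a c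
  -- the primitive Φ ε = ∫ ε..bmax g
  set Φ : ℝ → ℝ := fun x => ∫ t in x..bmax, g t with hΦ
  have hΦcont : Continuous Φ := by
    have : Continuous fun x => ∫ t in bmax..x, g t :=
      intervalIntegral.continuous_primitive hgint bmax
    have heq : Φ = fun x => -∫ t in bmax..x, g t := by
      funext x; exact intervalIntegral.integral_symm bmax x
    rw [heq]
    exact this.neg
  have T1 : Tendsto Φ (nhdsWithin 0 (Set.Ioi 0)) (nhds (∫ t in (0:ℝ)..bmax, g t)) :=
    (hΦcont.tendsto 0).mono_left nhdsWithin_le_nhds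
  -- F tends to 0 at 0+
  have hu_top : Tendsto (fun ε : ℝ => z / (4 * ε ^ 2)) (nhdsWithin 0 (Set.Ioi 0)) atTop := by
    have h1 : Tendsto (fun ε : ℝ => 4 * ε ^ 2) (nhdsWithin 0 (Set.Ioi 0))
        (nhdsWithin 0 (Set.Ioi 0)) := by
      refine tendsto_nhdsWithin_of_tendsto_nhds_of_eventually_within _ ?_ ?_
      · have : Tendsto (fun ε : ℝ => 4 * ε ^ 2) (nhds 0) (nhds (4 * 0 ^ 2)) :=
          ((continuous_const.mul (continuous_pow 2)).tendsto 0)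
        simpa using this.mono_left nhdsWithin_le_nhds
      · filter_upwards [self_mem_nhdsWithin] with ε (hε : 0 < ε)
        exact Set.mem_Ioi.2 (by positivity)
    have h2 : Tendsto (fun x : ℝ => x⁻¹) (nhdsWithin 0 (Set.Ioi 0)) atTop :=
      tendsto_inv_nhdsGT_zero
    have := (h2.comp h1).const_mul_atTop hz
    simpa [div_eq_mul_inv, Function.comp_def] using this
  have hF0 : Tendsto F (nhdsWithin 0 (Set.Ioi 0)) (nhds 0) := by
    have hexp0 : Tendsto (fun ε : ℝ => Real.exp (-z / (4 * ε ^ 2)))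
        (nhdsWithin 0 (Set.Ioi 0)) (nhds 0) := by
      have := Real.tendsto_exp_atBot.comp (tendsto_neg_atTop_atBot.comp hu_top)
      refine this.congr fun ε => ?_
      simp [Function.comp_def, neg_div]
    have hsq0 : Tendsto (fun ε : ℝ => 4 * ε ^ 2) (nhdsWithin 0 (Set.Ioi 0)) (nhds 0) := by
      have : Tendsto (fun ε : ℝ => 4 * ε ^ 2) (nhds 0) (nhds (4 * 0 ^ 2)) :=
        ((continuous_const.mul (continuous_pow 2)).tendsto 0)
      simpa using this.mono_left nhdsWithin_le_nhds
    have hnegEi0 : Tendsto (fun ε : ℝ => negEi (z / (4 * ε ^ 2)))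
        (nhdsWithin 0 (Set.Ioi 0)) (nhds 0) := negEi_tendsto_zero.comp hu_top
    have := (((hsq0.mul hexp0).add (hnegEi0.const_mul z)).const_mul (1/8 : ℝ))
    simpa [hF, mul_comm, mul_assoc] using this
  have T2 : Tendsto Φ (nhdsWithin 0 (Set.Ioi 0)) (nhds (F bmax)) := by
    have heq : ∀ᶠ ε in nhdsWithin 0 (Set.Ioi 0), Φ ε = F bmax - F ε := by
      filter_upwards [Ioo_mem_nhdsGT_of_mem (Set.left_mem_Ico.2 hb)] with ε hε
      rw [hΦ]
      refine intervalIntegral.integral_eq_sub_of_hasDerivAt (fun t ht => ?_) (hgint ε bmax)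
      rw [Set.uIcc_of_le hε.2.le] at ht
      exact hFderiv t (lt_of_lt_of_le hε.1 ht.1)
    have : Tendsto (fun ε => F bmax - F ε) (nhdsWithin 0 (Set.Ioi 0)) (nhds (F bmax - 0)) :=
      tendsto_const_nhds.sub hF0
    rw [sub_zero] at this
    exact Tendsto.congr' (heq.mono fun ε h => h.symm) this
  have hmain : (∫ t in (0:ℝ)..bmax, g t) = F bmax := tendsto_nhds_unique T1 T2
  rw [← intervalIntegral.integral_of_le hb.le]
  exact hmain
end

section
/- For every z > 0 and every b_max > 0, the integral from 0 to b_max of (1/b) · exp(-z/(4b²)) db equals -(1/2) · Ei(-z/(4 b_max²)). -/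
open MeasureTheory Real

theorem integral_inv_b_exp (z bmax : ℝ) (hz : 0 < z) (hb : 0 < bmax) :
    (∫ b in Set.Ioc (0:ℝ) bmax, (1 / b) * Real.exp (-z / (4 * b^2)))
      = -(1/2) * negEi (z / (4 * bmax^2)) := by
  set a := z / (4 * bmax ^ 2) with ha_def
  have ha : 0 < a := by positivity
  have hs : MeasurableSet (Set.Ioo (0:ℝ) bmax) := measurableSet_Ioo
  have hderiv : ∀ b ∈ Set.Ioo (0:ℝ) bmax,
      HasDerivWithinAt (fun b => z / (4 * b ^ 2)) (-(z / (2 * b ^ 3)))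
        (Set.Ioo (0:ℝ) bmax) b := by
    intro b hb'
    have hb0 : (0:ℝ) < b := hb'.1
    have h1 := (hasDerivAt_const b z).div (((hasDerivAt_id b).pow 2).const_mul 4)
      (by positivity : (4 * b ^ 2 : ℝ) ≠ 0)
    have h2 : HasDerivAt (fun b : ℝ => z / (4 * b ^ 2))
        ((0 * (4 * b ^ 2) - z * (4 * ((2:ℕ) * b ^ (2 - 1) * 1))) / (4 * b ^ 2) ^ 2) b := h1
    refine h2.hasDerivWithinAt.congr_deriv ?_
    field_simp
    ring
  have hinj : Set.InjOn (fun b => z / (4 * b ^ 2)) (Set.Ioo (0:ℝ) bmax) := by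
    intro b1 h1 b2 h2 h
    simp only at h
    have hb1 : (0:ℝ) < b1 := h1.1
    have hb2 : (0:ℝ) < b2 := h2.1
    field_simp at h
    nlinarith [h]
  have himg : (fun b => z / (4 * b ^ 2)) '' Set.Ioo (0:ℝ) bmax = Set.Ioi a := by
    ext t
    constructor
    · rintro ⟨b, hb', rfl⟩
      have hb1 : (0:ℝ) < b := hb'.1
      have hb2 : b < bmax := hb'.2
      have : b ^ 2 < bmax ^ 2 := by nlinarith
      simp only [Set.mem_Ioi, ha_def]
      rw [div_lt_div_iff₀ (by positivity) (by positivity)]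
      nlinarith
    · intro ht
      have ht' : a < t := ht
      have ht0 : 0 < t := lt_trans ha ht'
      refine ⟨Real.sqrt (z / (4 * t)), ⟨Real.sqrt_pos.mpr (by positivity), ?_⟩, ?_⟩
      · have hlt : z / (4 * t) < bmax ^ 2 := by
          rw [div_lt_iff₀ (by positivity)]
          have := (div_lt_iff₀ (by positivity : (0:ℝ) < 4 * bmax ^ 2)).mp ht'
          nlinarith
        calc Real.sqrt (z / (4 * t)) < Real.sqrt (bmax ^ 2) := by
              exact Real.sqrt_lt_sqrt (by positivity) hlt
          _ = bmax := by rw [Real.sqrt_sq hb.le]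
      · have hsq : Real.sqrt (z / (4 * t)) ^ 2 = z / (4 * t) :=
          Real.sq_sqrt (by positivity)
        simp only
        rw [hsq]
        field_simp
  have key := MeasureTheory.integral_image_eq_integral_abs_deriv_smul hs hderiv hinj
      (fun t => Real.exp (-t) / t)
  rw [himg] at key
  have hcongr : (∫ b in Set.Ioo (0:ℝ) bmax,
        |(-(z / (2 * b ^ 3)))| • (Real.exp (-(z / (4 * b ^ 2))) / (z / (4 * b ^ 2))))
      = ∫ b in Set.Ioo (0:ℝ) bmax, 2 * ((1 / b) * Real.exp (-z / (4 * b ^ 2))) := by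
    apply MeasureTheory.setIntegral_congr_fun hs
    intro b hb'
    have hb1 : (0:ℝ) < b := hb'.1
    dsimp only
    have habs : |(-(z / (2 * b ^ 3)))| = z / (2 * b ^ 3) := by
      rw [abs_neg, abs_of_pos (by positivity)]
    rw [habs, smul_eq_mul]
    rw [neg_div]
    field_simp
    ring
  rw [hcongr, MeasureTheory.integral_const_mul] at key
  have hIoc : (∫ b in Set.Ioc (0:ℝ) bmax, (1 / b) * Real.exp (-z / (4 * b ^ 2)))
      = ∫ b in Set.Ioo (0:ℝ) bmax, (1 / b) * Real.exp (-z / (4 * b ^ 2)) :=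
    MeasureTheory.integral_Ioc_eq_integral_Ioo
  rw [hIoc, negEi]
  linarith [key]
end

section
/- As z tends to 0 from the right, Ei(-z) - log(z) tends to γ, the Euler–Mascheroni constant; that is, the function z ↦ Ei(-z) - log(z) on (0, ∞) converges to the Euler–Mascheroni constant along the filter of neighborhoods of 0 within (0, ∞). -/
open MeasureTheory Real Filter

-- |log t| ≤ 2 * t ^ (-(1:ℝ)/2) + t for t > 0
lemma aux_abs_log_le {t : ℝ} (ht : 0 < t) :
    |Real.log t| ≤ 2 * t ^ (-(1:ℝ)/2) + t := by
  have h2 : (0:ℝ) ≤ 2 * t ^ (-(1:ℝ)/2) := by positivity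
  rcases le_or_gt t 1 with h | h
  · have hlt : Real.log t ≤ 0 := Real.log_nonpos ht.le h
    rw [abs_of_nonpos hlt]
    have : -Real.log t = 2 * Real.log (t ^ (-(1:ℝ)/2)) := by
      rw [Real.log_rpow ht]; ring
    rw [this]
    have := Real.log_le_self (Real.rpow_nonneg ht.le (-(1:ℝ)/2))
    nlinarith [ht.le]
  · rw [abs_of_nonneg (Real.log_nonneg h.le)]
    have := Real.log_le_self (by linarith : (0:ℝ) ≤ t)
    linarith

lemma aux_integrable : IntegrableOn (fun t : ℝ => Real.exp (-t) * Real.log t) (Set.Ioi 0) := by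
  have h1 : IntegrableOn (fun x : ℝ => Real.exp (-x) * x ^ ((1:ℝ)/2 - 1)) (Set.Ioi 0) :=
    Real.GammaIntegral_convergent (by norm_num)
  have h2 : IntegrableOn (fun x : ℝ => Real.exp (-x) * x ^ ((2:ℝ) - 1)) (Set.Ioi 0) :=
    Real.GammaIntegral_convergent (by norm_num)
  refine (((h1.const_mul 2).add h2).mono' ?_ ?_)
  · exact ((Real.measurable_exp.comp measurable_neg).mul Real.measurable_log).aestronglyMeasurable
  · filter_upwards [ae_restrict_mem measurableSet_Ioi] with t ht
    have ht' : (0:ℝ) < t := ht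
    have hb := aux_abs_log_le ht'
    have he : (0:ℝ) < Real.exp (-t) := Real.exp_pos _
    rw [Real.norm_eq_abs, abs_mul, abs_of_pos he]
    have h12 : t ^ ((1:ℝ)/2 - 1) = t ^ (-(1:ℝ)/2) := by norm_num
    have h21 : t ^ ((2:ℝ) - 1) = t := by
      rw [show ((2:ℝ) - 1) = 1 by norm_num, Real.rpow_one]
    simp only [Pi.add_apply]
    rw [h12, h21]
    calc Real.exp (-t) * |Real.log t| ≤ Real.exp (-t) * (2 * t ^ (-(1:ℝ)/2) + t) := by
          exact mul_le_mul_of_nonneg_left hb he.le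
      _ = 2 * (Real.exp (-t) * t ^ (-(1:ℝ)/2)) + Real.exp (-t) * t := by ring

lemma aux_integral_eq :
    ∫ t in Set.Ioi 0, Real.exp (-t) * Real.log t = -Real.eulerMascheroniConstant := by
  set J : ℝ := ∫ t in Set.Ioi 0, Real.log t * Real.exp (-t) with hJ
  have hd := Complex.hasDerivAt_GammaIntegral (s := 1) (by norm_num)
  have hsimp : (∫ t : ℝ in Set.Ioi 0, (t:ℂ) ^ ((1:ℂ) - 1) * (Real.log t * Real.exp (-t)))
      = (J : ℂ) := by
    rw [hJ]
    calc (∫ t : ℝ in Set.Ioi 0, (t:ℂ) ^ ((1:ℂ) - 1) * (Real.log t * Real.exp (-t)))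
        = ∫ t : ℝ in Set.Ioi 0, ((Real.log t * Real.exp (-t) : ℝ) : ℂ) := by
          refine setIntegral_congr_fun measurableSet_Ioi fun t ht => ?_
          simp [sub_self, Complex.cpow_zero]
      _ = _ := integral_ofReal
  rw [hsimp] at hd
  have hev : Complex.Gamma =ᶠ[nhds (1:ℂ)] Complex.GammaIntegral := by
    have hopen : IsOpen {s : ℂ | 0 < s.re} := isOpen_lt continuous_const Complex.continuous_re
    filter_upwards [hopen.mem_nhds (by norm_num : (0:ℝ) < (1:ℂ).re)] with s hs
    exact Complex.Gamma_eq_integral hs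
  have hd2 : HasDerivAt Complex.Gamma (J : ℂ) 1 := hd.congr_of_eventuallyEq hev
  have hd3 : HasDerivAt (fun x : ℝ => (Complex.Gamma (x:ℂ)).re) J 1 := by
    have h1 : HasDerivAt Complex.Gamma (J : ℂ) ((1:ℝ):ℂ) := by exact_mod_cast hd2
    simpa using h1.real_of_complex
  have heq : (fun x : ℝ => (Complex.Gamma (x:ℂ)).re) = Real.Gamma := by
    funext x; rw [Complex.Gamma_ofReal, Complex.ofReal_re]
  rw [heq] at hd3
  have huniq : J = -Real.eulerMascheroniConstant := hd3.unique Real.hasDerivAt_Gamma_one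
  rw [← huniq, hJ]
  simp_rw [mul_comm]

lemma aux_tendsto_top :
    Filter.Tendsto (fun x : ℝ => Real.exp (-x) * Real.log x) atTop (nhds 0) := by
  have h := Real.tendsto_pow_mul_exp_neg_atTop_nhds_zero 1
  refine tendsto_of_tendsto_of_tendsto_of_le_of_le' tendsto_const_nhds h ?_ ?_
  · filter_upwards [Filter.eventually_ge_atTop 1] with x hx
    exact mul_nonneg (Real.exp_pos _).le (Real.log_nonneg hx)
  · filter_upwards [Filter.eventually_ge_atTop 1] with x hx
    have hlog : Real.log x ≤ x := Real.log_le_self (by linarith)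
    calc Real.exp (-x) * Real.log x ≤ Real.exp (-x) * x :=
          mul_le_mul_of_nonneg_left hlog (Real.exp_pos _).le
      _ = x ^ 1 * Real.exp (-x) := by ring

lemma aux_ibp {z : ℝ} (hz : 0 < z) :
    negEi z = Real.exp (-z) * Real.log z - ∫ t in Set.Ioi z, Real.exp (-t) * Real.log t := by
  have hA : IntegrableOn (fun t : ℝ => Real.exp (-t) * t⁻¹) (Set.Ioi z) := by
    refine ((exp_neg_integrableOn_Ioi z one_pos).const_mul z⁻¹).mono' ?_ ?_
    · exact ((Real.measurable_exp.comp measurable_neg).mul measurable_inv).aestronglyMeasurable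
    · filter_upwards [ae_restrict_mem measurableSet_Ioi] with t ht
      have h0t : (0:ℝ) < t := hz.trans ht
      have hinv : t⁻¹ ≤ z⁻¹ := inv_anti₀ hz (le_of_lt ht)
      rw [Real.norm_eq_abs, abs_of_nonneg (by positivity)]
      have : Real.exp (-t) * t⁻¹ ≤ Real.exp (-t) * z⁻¹ :=
        mul_le_mul_of_nonneg_left hinv (Real.exp_pos _).le
      calc Real.exp (-t) * t⁻¹ ≤ Real.exp (-t) * z⁻¹ := this
        _ = z⁻¹ * Real.exp (-1 * t) := by rw [neg_one_mul]; ring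
  have hB : IntegrableOn (fun t : ℝ => -Real.exp (-t) * Real.log t) (Set.Ioi z) := by
    have h := (aux_integrable.mono_set (Set.Ioi_subset_Ioi hz.le)).neg
    exact h.congr (Filter.Eventually.of_forall fun t => by simp)
  have h_zero : Filter.Tendsto (fun x : ℝ => Real.exp (-x) * Real.log x)
      (nhdsWithin z (Set.Ioi z)) (nhds (Real.exp (-z) * Real.log z)) := by
    have hc : ContinuousAt (fun x : ℝ => Real.exp (-x) * Real.log x) z :=
      ((Real.continuous_exp.comp continuous_neg).continuousAt).mul (Real.continuousAt_log hz.ne')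
    exact hc.tendsto.mono_left nhdsWithin_le_nhds
  have key := MeasureTheory.integral_Ioi_mul_deriv_eq_deriv_mul
    (u := fun t : ℝ => Real.exp (-t)) (u' := fun t : ℝ => -Real.exp (-t))
    (v := Real.log) (v' := fun t : ℝ => t⁻¹)
    (fun x hx => by simpa [mul_comm] using ((hasDerivAt_id x).neg.exp))
    (fun x hx => Real.hasDerivAt_log (hz.trans hx).ne')
    hA hB h_zero aux_tendsto_top
  rw [negEi]
  simp_rw [div_eq_mul_inv]
  rw [key]
  have : ∫ x in Set.Ioi z, -Real.exp (-x) * Real.log x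
      = -∫ x in Set.Ioi z, Real.exp (-x) * Real.log x := by
    simp_rw [neg_mul]
    exact integral_neg _
  rw [this]
  ring

lemma aux_tail_tendsto :
    Filter.Tendsto (fun z : ℝ => ∫ t in Set.Ioi z, Real.exp (-t) * Real.log t)
      (nhdsWithin 0 (Set.Ioi 0))
      (nhds (∫ t in Set.Ioi 0, Real.exp (-t) * Real.log t)) := by
  set f := fun t : ℝ => Real.exp (-t) * Real.log t with hf
  have hIcc : IntegrableOn f (Set.Icc 0 1) := by
    rw [integrableOn_Icc_iff_integrableOn_Ioc]
    exact aux_integrable.mono_set Set.Ioc_subset_Ioi_self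
  have hcont := intervalIntegral.continuousOn_primitive hIcc
  have h0 : Filter.Tendsto (fun z : ℝ => ∫ t in Set.Ioc 0 z, f t)
      (nhdsWithin 0 (Set.Ioi 0)) (nhds 0) := by
    have hc := (hcont 0 (by norm_num : (0:ℝ) ∈ Set.Icc (0:ℝ) 1)).tendsto
    simp only [Set.Ioc_self, Measure.restrict_empty, integral_zero_measure] at hc
    refine hc.mono_left ?_
    rw [← nhdsWithin_Ioc_eq_nhdsGT (zero_lt_one (α := ℝ))]
    exact nhdsWithin_mono _ Set.Ioc_subset_Icc_self
  have heq : ∀ᶠ z in nhdsWithin 0 (Set.Ioi 0),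
      (∫ t in Set.Ioi 0, f t) - ∫ t in Set.Ioc 0 z, f t = ∫ t in Set.Ioi z, f t := by
    filter_upwards [self_mem_nhdsWithin] with z hz
    have hz' : (0:ℝ) < z := hz
    have hsplit : ∫ t in Set.Ioc 0 z ∪ Set.Ioi z, f t
        = (∫ t in Set.Ioc 0 z, f t) + ∫ t in Set.Ioi z, f t :=
      setIntegral_union (Set.Ioc_disjoint_Ioi le_rfl) measurableSet_Ioi
        (aux_integrable.mono_set Set.Ioc_subset_Ioi_self)
        (aux_integrable.mono_set (Set.Ioi_subset_Ioi hz'.le))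
    rw [Set.Ioc_union_Ioi_eq_Ioi hz'.le] at hsplit
    rw [hsplit]; ring
  have hsub := (tendsto_const_nhds (x := ∫ t in Set.Ioi 0, f t)).sub h0
  rw [sub_zero] at hsub
  exact hsub.congr' heq

lemma aux_F : Filter.Tendsto (fun z : ℝ => (Real.exp (-z) - 1) * Real.log z)
    (nhdsWithin 0 (Set.Ioi 0)) (nhds 0) := by
  have h1 : Filter.Tendsto (fun z : ℝ => (Real.exp (-z) - 1) / z)
      (nhdsWithin 0 (Set.Ioi 0)) (nhds (-1)) := by
    have hd : HasDerivAt (fun x : ℝ => Real.exp (-x)) (-1) 0 := by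
      simpa using ((hasDerivAt_id (0:ℝ)).neg.exp)
    have hs := hasDerivAt_iff_tendsto_slope.mp hd
    have hmono : nhdsWithin (0:ℝ) (Set.Ioi 0) ≤ nhdsWithin 0 {(0:ℝ)}ᶜ :=
      nhdsWithin_mono _ (fun x hx => ne_of_gt hx)
    refine (hs.mono_left hmono).congr' ?_
    filter_upwards [self_mem_nhdsWithin] with z hz
    have hz' : (0:ℝ) < z := hz
    simp [slope_def_field, Real.exp_zero]
  have h2 : Filter.Tendsto (fun z : ℝ => z * Real.log z)
      (nhdsWithin 0 (Set.Ioi 0)) (nhds 0) := by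
    have := tendsto_log_mul_rpow_nhdsGT_zero one_pos
    have h' : (fun x : ℝ => Real.log x * x ^ (1:ℝ)) = fun x : ℝ => Real.log x * x := by
      funext x; rw [Real.rpow_one]
    rw [h'] at this
    simpa [mul_comm] using this
  have hmul := h1.mul h2
  rw [show (-1 : ℝ) * 0 = 0 by ring] at hmul
  refine hmul.congr' ?_
  filter_upwards [self_mem_nhdsWithin] with z hz
  have hz' : (0:ℝ) < z := hz
  field_simp

theorem negEi_sub_log_tendsto_eulerMascheroni :
    Filter.Tendsto (fun z : ℝ => negEi z - Real.log z)
      (nhdsWithin 0 (Set.Ioi 0)) (nhds Real.eulerMascheroniConstant) := by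
  have heq : ∀ᶠ z in nhdsWithin (0:ℝ) (Set.Ioi 0),
      (Real.exp (-z) - 1) * Real.log z - (∫ t in Set.Ioi z, Real.exp (-t) * Real.log t)
        = negEi z - Real.log z := by
    filter_upwards [self_mem_nhdsWithin] with z hz
    have hz' : (0:ℝ) < z := hz
    rw [aux_ibp hz']; ring
  have h := aux_F.sub aux_tail_tendsto
  rw [aux_integral_eq, show (0:ℝ) - -Real.eulerMascheroniConstant = Real.eulerMascheroniConstant
    by ring] at h
  exact h.congr' heq
end

section
/- Under the assumptions of Theorem 1 (arbitrary positive weights, not necessarily summing to one), the closed-form expression Σ_{i,j=1}^M w_i^y w_j^y γ(‖y_i - y_j‖²) - 2 Σ_{i=1}^L Σ_{j=1}^M w_i^x w_j^y γ(‖x_i - y_j‖²) + Σ_{i,j=1}^L w_i^x w_j^x γ(‖x_i - x_j‖²) is nonnegative, since it equals the integral of a square: ∫_0^{b_max} b^{-(N-1)} ∫_{ℝ^N} (F̃(m,b) - F(m,b))² dm db ≥ 0. -/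
open MeasureTheory Real

open Nat Filter
set_option linter.unusedVariables false

lemma sq_sum_expand {ι : Type*} [Fintype ι] {n N : ℕ} (e : ι → ℝ) (u : ι → Fin N → ℝ) :
    0 ≤ ∑ i, ∑ j, e i * e j * (∑ k, u i k * u j k) ^ n := by
  classical
  set S := Fintype.piFinset (fun _ : Fin n => (Finset.univ : Finset (Fin N))) with hS
  have h : ∀ i j : ι, (∑ k, u i k * u j k) ^ n
      = ∑ f ∈ S, (∏ t, u i (f t)) * (∏ t, u j (f t)) := by
    intro i j
    calc (∑ k, u i k * u j k) ^ n = ∏ _t : Fin n, (∑ k, u i k * u j k) := by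
          rw [Finset.prod_const, Finset.card_univ, Fintype.card_fin]
      _ = ∑ f ∈ S, ∏ t, u i (f t) * u j (f t) := Finset.prod_univ_sum _ _
      _ = _ := by simp [Finset.prod_mul_distrib]
  have key : ∑ i, ∑ j, e i * e j * (∑ k, u i k * u j k) ^ n
      = ∑ f ∈ S, (∑ i, e i * ∏ t, u i (f t)) ^ 2 := by
    simp only [h, Finset.mul_sum]
    rw [show (∑ i, ∑ j : ι, ∑ f ∈ S, e i * e j * ((∏ t, u i (f t)) * ∏ t, u j (f t)))
        = ∑ f ∈ S, ∑ i, ∑ j : ι, e i * e j * ((∏ t, u i (f t)) * ∏ t, u j (f t)) by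
      calc (∑ i, ∑ j : ι, ∑ f ∈ S, e i * e j * ((∏ t, u i (f t)) * ∏ t, u j (f t)))
          = ∑ i, ∑ f ∈ S, ∑ j : ι, e i * e j * ((∏ t, u i (f t)) * ∏ t, u j (f t)) :=
            Finset.sum_congr rfl fun i _ => Finset.sum_comm
        _ = _ := Finset.sum_comm]
    refine Finset.sum_congr rfl fun f _ => ?_
    rw [sq, Finset.sum_mul_sum]
    exact Finset.sum_congr rfl fun i _ => Finset.sum_congr rfl fun j _ => by ring
  rw [key]
  exact Finset.sum_nonneg fun f _ => sq_nonneg _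

lemma exp_tsum (s : ℝ) : Real.exp s = ∑' n : ℕ, s ^ n / n ! := by
  rw [Real.exp_eq_exp_ℝ, NormedSpace.exp_eq_tsum_div]

lemma gauss_quad_nonneg {ι : Type*} [Fintype ι] {N : ℕ} (d : ι → ℝ) (u : ι → Fin N → ℝ)
    {c : ℝ} (hc : 0 < c) :
    0 ≤ ∑ i, ∑ j, d i * d j * Real.exp (-(∑ k, (u i k - u j k) ^ 2) / c) := by
  classical
  set e : ι → ℝ := fun i => d i * Real.exp (-(∑ k, u i k ^ 2) / c) with he
  have hterm : ∀ i j : ι, d i * d j * Real.exp (-(∑ k, (u i k - u j k) ^ 2) / c)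
      = e i * e j * Real.exp ((2 / c) * ∑ k, u i k * u j k) := by
    intro i j
    have h1 : -(∑ k, (u i k - u j k) ^ 2) / c
        = (-(∑ k, u i k ^ 2) / c) + ((-(∑ k, u j k ^ 2) / c)
            + (2 / c) * ∑ k, u i k * u j k) := by
      have h2 : ∑ k, (u i k - u j k) ^ 2
          = ∑ k, u i k ^ 2 + ∑ k, u j k ^ 2 - 2 * ∑ k, u i k * u j k := by
        rw [Finset.mul_sum, ← Finset.sum_add_distrib, ← Finset.sum_sub_distrib]
        exact Finset.sum_congr rfl fun k _ => by ring
      rw [h2]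
      field_simp
      ring
    rw [h1, Real.exp_add, Real.exp_add, he]
    ring
  simp only [hterm]
  -- expand exp as a power series
  have hsummand : ∀ i j : ι, Summable (fun n : ℕ =>
      e i * e j * (((2 / c) * ∑ k, u i k * u j k) ^ n / n !)) :=
    fun i j => (Real.summable_pow_div_factorial _).mul_left _
  have hswap : ∑ i, ∑ j, e i * e j * Real.exp ((2 / c) * ∑ k, u i k * u j k)
      = ∑' n : ℕ, ∑ i, ∑ j, e i * e j * (((2 / c) * ∑ k, u i k * u j k) ^ n / n !) := by
    have : ∀ i j : ι, e i * e j * Real.exp ((2 / c) * ∑ k, u i k * u j k)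
        = ∑' n : ℕ, e i * e j * (((2 / c) * ∑ k, u i k * u j k) ^ n / n !) := by
      intro i j
      rw [exp_tsum, tsum_mul_left]
    simp only [this]
    calc ∑ i, ∑ j : ι, ∑' n : ℕ, e i * e j * (((2 / c) * ∑ k, u i k * u j k) ^ n / n !)
        = ∑ i, ∑' n : ℕ, ∑ j : ι, e i * e j * (((2 / c) * ∑ k, u i k * u j k) ^ n / n !) :=
          Finset.sum_congr rfl fun i _ => (Summable.tsum_finsetSum fun j _ => hsummand i j).symm
      _ = _ := (Summable.tsum_finsetSum fun i _ =>
          (hasSum_sum fun j _ => (hsummand i j).hasSum).summable).symm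
  rw [hswap]
  refine tsum_nonneg fun n => ?_
  have : ∀ i j : ι, e i * e j * (((2 / c) * ∑ k, u i k * u j k) ^ n / n !)
      = ((2 / c) ^ n / n !) * (e i * e j * (∑ k, u i k * u j k) ^ n) := by
    intro i j; rw [mul_pow]; ring
  simp only [this, ← Finset.mul_sum]
  exact mul_nonneg (by positivity) (sq_sum_expand e u)

lemma contOn_g : ContinuousOn (fun s : ℝ => Real.exp (-s) / s) (Set.Ioi 0) :=
  (Real.continuous_exp.comp continuous_neg).continuousOn.div continuousOn_id
    fun s hs => ne_of_gt hs

lemma integrableOn_g {t : ℝ} (ht : 0 < t) :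
    IntegrableOn (fun s => Real.exp (-s) / s) (Set.Ioi t) := by
  have hmaj : IntegrableOn (fun s => Real.exp (-s) / t) (Set.Ioi t) := by
    have h1 : IntegrableOn (fun s : ℝ => Real.exp (-s)) (Set.Ioi t) := by
      have := exp_neg_integrableOn_Ioi t (zero_lt_one)
      simpa using this
    exact h1.div_const t
  refine hmaj.mono' ((contOn_g.mono fun s hs => lt_trans ht hs).aestronglyMeasurable
    measurableSet_Ioi) ?_
  rw [ae_restrict_iff' measurableSet_Ioi]
  filter_upwards with s hs
  rw [Real.norm_eq_abs, abs_div, abs_of_pos (Real.exp_pos _), abs_of_pos (lt_trans ht hs)]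
  exact div_le_div_of_nonneg_left (Real.exp_pos _).le ht (le_of_lt hs)

lemma negEi_nonpos {t : ℝ} (ht : 0 < t) : negEi t ≤ 0 := by
  rw [negEi, neg_nonpos]
  exact setIntegral_nonneg measurableSet_Ioi fun s hs =>
    div_nonneg (Real.exp_pos _).le (lt_trans ht hs).le

lemma neg_negEi_le {t : ℝ} (ht : 0 < t) : -negEi t ≤ Real.exp (-t) / t := by
  rw [negEi, neg_neg]
  calc ∫ s in Set.Ioi t, Real.exp (-s) / s
      ≤ ∫ s in Set.Ioi t, Real.exp (-s) / t := by
        refine setIntegral_mono_on (integrableOn_g ht) ?_ measurableSet_Ioi fun s hs => ?_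
        · have h1 : IntegrableOn (fun s : ℝ => Real.exp (-s)) (Set.Ioi t) := by
            simpa using exp_neg_integrableOn_Ioi t (zero_lt_one)
          exact h1.div_const t
        · exact div_le_div_of_nonneg_left (Real.exp_pos _).le ht (le_of_lt hs)
    _ = (∫ s in Set.Ioi t, Real.exp (-s)) / t := by rw [integral_div]
    _ = Real.exp (-t) / t := by rw [integral_exp_neg_Ioi]

lemma hasDerivAt_negEi {t : ℝ} (ht : 0 < t) :
    HasDerivAt negEi (Real.exp (-t) / t) t := by
  set g : ℝ → ℝ := fun s => Real.exp (-s) / s with hg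
  set a : ℝ := t / 2 with ha
  have hat : a < t := by simpa [ha] using half_lt_self ht
  have ha0 : 0 < a := by positivity
  have hint : ∀ s : ℝ, a ≤ s → IntervalIntegrable g volume a s := by
    intro s hs
    refine (contOn_g.mono ?_).intervalIntegrable
    rw [Set.uIcc_of_le hs]
    exact fun u hu => lt_of_lt_of_le ha0 hu.1
  have hG : HasDerivAt (fun s : ℝ => ∫ u in a..s, g u) (g t) t := by
    refine intervalIntegral.integral_hasDerivAt_right (hint t hat.le)
      (contOn_g.stronglyMeasurableAtFilter isOpen_Ioi t ht) ?_
    exact contOn_g.continuousAt (isOpen_Ioi.mem_nhds ht)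
  have heq : negEi =ᶠ[nhds t] fun s => (∫ u in a..s, g u) - ∫ u in Set.Ioi a, g u := by
    filter_upwards [Ioi_mem_nhds hat] with s hs
    have hsplit : ∫ u in Set.Ioi a, g u
        = (∫ u in Set.Ioc a s, g u) + ∫ u in Set.Ioi s, g u := by
      rw [← Set.Ioc_union_Ioi_eq_Ioi (le_of_lt hs)]
      exact setIntegral_union (Set.Ioc_disjoint_Ioi le_rfl) measurableSet_Ioi
        ((integrableOn_g ha0).mono_set Set.Ioc_subset_Ioi_self)
        (integrableOn_g (lt_trans ha0 hs))
    rw [intervalIntegral.integral_of_le (le_of_lt hs), hsplit, negEi]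
    ring
  exact (hG.sub_const _).congr_of_eventuallyEq heq

lemma cont_f {z : ℝ} (hz : 0 ≤ z) : Continuous (fun b : ℝ => b * Real.exp (-z / (4 * b ^ 2))) := by
  rw [continuous_iff_continuousAt]
  intro b
  rcases eq_or_ne b 0 with rfl | hb
  · have hbound : ∀ b : ℝ, ‖b * Real.exp (-z / (4 * b ^ 2))‖ ≤ |b| := by
      intro b
      rw [Real.norm_eq_abs, abs_mul, abs_of_pos (Real.exp_pos _)]
      refine mul_le_of_le_one_right (abs_nonneg _) (Real.exp_le_one_iff.mpr ?_)
      rw [neg_div, neg_nonpos]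
      positivity
    have h0 : Tendsto (fun b : ℝ => b * Real.exp (-z / (4 * b ^ 2))) (nhds 0) (nhds 0) := by
      refine squeeze_zero_norm hbound ?_
      simpa using (continuous_abs.tendsto (0:ℝ))
    simpa [ContinuousAt] using h0
  · have h4 : ContinuousAt (fun b : ℝ => -z / (4 * b ^ 2)) b :=
      continuousAt_const.div (by fun_prop) (by positivity)
    exact continuousAt_id.mul (Real.continuous_exp.continuousAt.comp h4)

lemma hasDerivAt_H {z : ℝ} (hz : 0 < z) {b : ℝ} (hb : 0 < b) :
    HasDerivAt (fun b : ℝ => b ^ 2 / 2 * Real.exp (-z / (4 * b ^ 2))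
        + z / 8 * negEi (z / (4 * b ^ 2)))
      (b * Real.exp (-z / (4 * b ^ 2))) b := by
  have hb2 : (4:ℝ) * b ^ 2 ≠ 0 := by positivity
  have hden : HasDerivAt (fun b : ℝ => 4 * b ^ 2) (8 * b) b := by
    have := (hasDerivAt_pow 2 b).const_mul (4:ℝ)
    exact this.congr_deriv (by norm_num; ring)
  have ht : HasDerivAt (fun b : ℝ => z / (4 * b ^ 2)) (-z / (2 * b ^ 3)) b := by
    have := (hasDerivAt_const b z).div hden hb2
    refine this.congr_deriv ?_
    field_simp
    ring
  have hneg : HasDerivAt (fun b : ℝ => -z / (4 * b ^ 2)) (z / (2 * b ^ 3)) b := by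
    have := ht.neg
    simp only [neg_div] at this ⊢
    simp only [neg_neg] at this
    exact this
  have htb : 0 < z / (4 * b ^ 2) := by positivity
  have h1 : HasDerivAt (fun b : ℝ => b ^ 2 / 2 * Real.exp (-z / (4 * b ^ 2)))
      (2 * b / 2 * Real.exp (-z / (4 * b ^ 2))
        + b ^ 2 / 2 * (Real.exp (-z / (4 * b ^ 2)) * (z / (2 * b ^ 3)))) b := by
    have := ((hasDerivAt_pow 2 b).div_const 2).mul hneg.exp
    refine this.congr_deriv ?_
    norm_num
  have h2 : HasDerivAt (fun b : ℝ => z / 8 * negEi (z / (4 * b ^ 2)))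
      (z / 8 * (Real.exp (-(z / (4 * b ^ 2))) / (z / (4 * b ^ 2)) * (-z / (2 * b ^ 3)))) b := by
    exact ((hasDerivAt_negEi htb).comp b ht).const_mul _
  have hsum := h1.add h2
  refine hsum.congr_deriv ?_
  rw [neg_div]
  have hbne : b ≠ 0 := ne_of_gt hb
  have hzne : z ≠ 0 := ne_of_gt hz
  field_simp
  ring

lemma tendsto_H_zero {z : ℝ} (hz : 0 < z) :
    Tendsto (fun b : ℝ => b ^ 2 / 2 * Real.exp (-z / (4 * b ^ 2))
        + z / 8 * negEi (z / (4 * b ^ 2))) (nhdsWithin 0 (Set.Ioi 0)) (nhds 0) := by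
  refine squeeze_zero_norm' (a := fun b : ℝ => b ^ 2) ?_ ?_
  · filter_upwards [self_mem_nhdsWithin] with b hb
    have hb' : (0:ℝ) < b := hb
    have htb : 0 < z / (4 * b ^ 2) := by positivity
    have hE : Real.exp (-z / (4 * b ^ 2)) ≤ 1 := by
      refine Real.exp_le_one_iff.mpr ?_
      rw [neg_div, neg_nonpos]
      positivity
    have hB : |z / 8 * negEi (z / (4 * b ^ 2))| ≤ b ^ 2 / 2 := by
      rw [abs_mul, abs_of_pos (by positivity : (0:ℝ) < z / 8),
        abs_of_nonpos (negEi_nonpos htb)]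
      have h1 := neg_negEi_le htb
      have h2 : z / 8 * -negEi (z / (4 * b ^ 2))
          ≤ z / 8 * (Real.exp (-(z / (4 * b ^ 2))) / (z / (4 * b ^ 2))) :=
        mul_le_mul_of_nonneg_left h1 (by positivity)
      refine h2.trans ?_
      have heq : z / 8 * (Real.exp (-(z / (4 * b ^ 2))) / (z / (4 * b ^ 2)))
          = b ^ 2 / 2 * Real.exp (-(z / (4 * b ^ 2))) := by
        field_simp
        ring
      rw [heq, ← neg_div]
      calc b ^ 2 / 2 * Real.exp (-z / (4 * b ^ 2)) ≤ b ^ 2 / 2 * 1 :=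
            mul_le_mul_of_nonneg_left hE (by positivity)
        _ = b ^ 2 / 2 := by ring
    have hA : |b ^ 2 / 2 * Real.exp (-z / (4 * b ^ 2))| ≤ b ^ 2 / 2 := by
      rw [abs_mul, abs_of_pos (by positivity : (0:ℝ) < b ^ 2 / 2),
        abs_of_pos (Real.exp_pos _)]
      calc b ^ 2 / 2 * Real.exp (-z / (4 * b ^ 2)) ≤ b ^ 2 / 2 * 1 :=
            mul_le_mul_of_nonneg_left hE (by positivity)
        _ = b ^ 2 / 2 := by ring
    calc ‖b ^ 2 / 2 * Real.exp (-z / (4 * b ^ 2)) + z / 8 * negEi (z / (4 * b ^ 2))‖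
        ≤ |b ^ 2 / 2 * Real.exp (-z / (4 * b ^ 2))| + |z / 8 * negEi (z / (4 * b ^ 2))| :=
          abs_add_le _ _
      _ ≤ b ^ 2 / 2 + b ^ 2 / 2 := add_le_add hA hB
      _ = b ^ 2 := by ring
  · have : Tendsto (fun b : ℝ => b ^ 2) (nhds 0) (nhds 0) := by
      simpa using (continuous_pow 2).tendsto (0:ℝ)
    exact this.mono_left nhdsWithin_le_nhds

lemma integral_f_pos {z : ℝ} (hz : 0 < z) {bm : ℝ} (hbm : 0 < bm) :
    ∫ b in (0:ℝ)..bm, b * Real.exp (-z / (4 * b ^ 2))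
      = bm ^ 2 / 2 * Real.exp (-z / (4 * bm ^ 2)) + z / 8 * negEi (z / (4 * bm ^ 2)) := by
  rw [intervalIntegral.integral_eq_sub_of_hasDerivAt_of_tendsto hbm
    (fun b hb => hasDerivAt_H hz hb.1) ((cont_f hz.le).intervalIntegrable 0 bm)
    (tendsto_H_zero hz)
    (((hasDerivAt_H hz hbm).continuousAt.tendsto).mono_left nhdsWithin_le_nhds)]
  ring

lemma integral_f_zero {bm : ℝ} :
    ∫ b in (0:ℝ)..bm, b * Real.exp (-(0:ℝ) / (4 * b ^ 2)) = bm ^ 2 / 2 := by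
  simp [integral_id]

theorem closed_form_distance_nonneg
    (N M L : ℕ) (hN : 1 ≤ N)
    (y : Fin M → Fin N → ℝ) (wy : Fin M → ℝ) (hwy : ∀ i, 0 < wy i)
    (x : Fin L → Fin N → ℝ) (wx : Fin L → ℝ) (hwx : ∀ i, 0 < wx i)
    (bmax : ℝ) (hb : 0 < bmax)
    (γ : ℝ → ℝ)
    (hγ : ∀ z, γ z = if z = 0 then Real.pi ^ ((N : ℝ) / 2) / 2 * bmax ^ 2
        else Real.pi ^ ((N : ℝ) / 2) / 8 *
          (4 * bmax ^ 2 * Real.exp (-z / (4 * bmax ^ 2))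
            + z * negEi (z / (4 * bmax ^ 2)))) :
    0 ≤ ∑ i, ∑ j, wy i * wy j * γ (∑ k, (y i k - y j k) ^ 2)
        - 2 * ∑ i, ∑ j, wx i * wy j * γ (∑ k, (x i k - y j k) ^ 2)
        + ∑ i, ∑ j, wx i * wx j * γ (∑ k, (x i k - x j k) ^ 2) := by
  classical
  set C : ℝ := Real.pi ^ ((N : ℝ) / 2) with hC
  have hC0 : (0:ℝ) ≤ C := by rw [hC]; positivity
  have key : ∀ z : ℝ, 0 ≤ z →
      γ z = C * ∫ b in (0:ℝ)..bmax, b * Real.exp (-z / (4 * b ^ 2)) := by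
    intro z hz
    rcases eq_or_lt_of_le hz with h | h
    · rw [← h, hγ, if_pos rfl, integral_f_zero, hC]
      ring
    · rw [hγ, if_neg (ne_of_gt h), integral_f_pos h hb, hC]
      ring
  set c : Sum (Fin M) (Fin L) → ℝ := Sum.elim wy (fun i => -wx i) with hc
  set p : Sum (Fin M) (Fin L) → Fin N → ℝ := Sum.elim y x with hp
  have hD : ∀ i j : Sum (Fin M) (Fin L), (0:ℝ) ≤ ∑ k, (p i k - p j k) ^ 2 :=
    fun i j => Finset.sum_nonneg fun k _ => sq_nonneg _
  have hsum : ∑ i, ∑ j, wy i * wy j * γ (∑ k, (y i k - y j k) ^ 2)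
        - 2 * ∑ i, ∑ j, wx i * wy j * γ (∑ k, (x i k - y j k) ^ 2)
        + ∑ i, ∑ j, wx i * wx j * γ (∑ k, (x i k - x j k) ^ 2)
      = ∑ i, ∑ j, c i * c j * γ (∑ k, (p i k - p j k) ^ 2) := by
    rw [Fintype.sum_sum_type]
    simp only [Fintype.sum_sum_type, hc, hp, Sum.elim_inl, Sum.elim_inr]
    rw [Finset.sum_add_distrib, Finset.sum_add_distrib]
    have h1 : ∑ i : Fin M, ∑ j : Fin L, wy i * -wx j * γ (∑ k, (y i k - x j k) ^ 2)
        = -∑ i : Fin L, ∑ j : Fin M, wx i * wy j * γ (∑ k, (x i k - y j k) ^ 2) := by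
      rw [Finset.sum_comm, ← Finset.sum_neg_distrib]
      refine Finset.sum_congr rfl fun j _ => ?_
      rw [← Finset.sum_neg_distrib]
      refine Finset.sum_congr rfl fun i _ => ?_
      rw [show (∑ k, (y i k - x j k) ^ 2) = ∑ k, (x j k - y i k) ^ 2 from
        Finset.sum_congr rfl fun k _ => by ring]
      ring
    have h2 : ∑ i : Fin L, ∑ j : Fin M, -wx i * wy j * γ (∑ k, (x i k - y j k) ^ 2)
        = -∑ i : Fin L, ∑ j : Fin M, wx i * wy j * γ (∑ k, (x i k - y j k) ^ 2) := by
      rw [← Finset.sum_neg_distrib]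
      refine Finset.sum_congr rfl fun i _ => ?_
      rw [← Finset.sum_neg_distrib]
      exact Finset.sum_congr rfl fun j _ => by ring
    have h3 : ∑ i : Fin L, ∑ j : Fin L, -wx i * -wx j * γ (∑ k, (x i k - x j k) ^ 2)
        = ∑ i : Fin L, ∑ j : Fin L, wx i * wx j * γ (∑ k, (x i k - x j k) ^ 2) :=
      Finset.sum_congr rfl fun i _ => Finset.sum_congr rfl fun j _ => by ring
    rw [h1, h2, h3]
    ring
  rw [hsum]
  have hcont : ∀ i j : Sum (Fin M) (Fin L),
      Continuous (fun b : ℝ => c i * c j * (b * Real.exp (-(∑ k, (p i k - p j k) ^ 2) / (4 * b ^ 2)))) :=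
    fun i j => continuous_const.mul (cont_f (hD i j))
  have hInt : ∀ i j : Sum (Fin M) (Fin L), IntervalIntegrable
      (fun b : ℝ => c i * c j * (b * Real.exp (-(∑ k, (p i k - p j k) ^ 2) / (4 * b ^ 2))))
      volume 0 bmax := fun i j => (hcont i j).intervalIntegrable 0 bmax
  have step1 : ∑ i, ∑ j, c i * c j * γ (∑ k, (p i k - p j k) ^ 2)
      = C * ∫ b in (0:ℝ)..bmax, ∑ i, ∑ j,
          c i * c j * (b * Real.exp (-(∑ k, (p i k - p j k) ^ 2) / (4 * b ^ 2))) := by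
    calc ∑ i, ∑ j, c i * c j * γ (∑ k, (p i k - p j k) ^ 2)
        = ∑ i, ∑ j, C * ∫ b in (0:ℝ)..bmax,
            c i * c j * (b * Real.exp (-(∑ k, (p i k - p j k) ^ 2) / (4 * b ^ 2))) := by
          refine Finset.sum_congr rfl fun i _ => Finset.sum_congr rfl fun j _ => ?_
          rw [key _ (hD i j), intervalIntegral.integral_const_mul]
          ring
      _ = C * ∑ i, ∑ j, ∫ b in (0:ℝ)..bmax,
            c i * c j * (b * Real.exp (-(∑ k, (p i k - p j k) ^ 2) / (4 * b ^ 2))) := by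
          simp only [← Finset.mul_sum]
      _ = C * ∑ i, ∫ b in (0:ℝ)..bmax, ∑ j,
            c i * c j * (b * Real.exp (-(∑ k, (p i k - p j k) ^ 2) / (4 * b ^ 2))) := by
          congr 1
          exact Finset.sum_congr rfl fun i _ =>
            (intervalIntegral.integral_finset_sum fun j _ => hInt i j).symm
      _ = C * ∫ b in (0:ℝ)..bmax, ∑ i, ∑ j,
            c i * c j * (b * Real.exp (-(∑ k, (p i k - p j k) ^ 2) / (4 * b ^ 2))) := by
          congr 1
          refine (intervalIntegral.integral_finset_sum fun i _ => ?_).symm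
          exact (continuous_finset_sum _ fun j _ => hcont i j).intervalIntegrable 0 bmax
  rw [step1]
  refine mul_nonneg hC0 (intervalIntegral.integral_nonneg hb.le fun u hu => ?_)
  rcases eq_or_lt_of_le hu.1 with h0 | h0
  · simp [← h0]
  · have hrw : ∀ i j : Sum (Fin M) (Fin L),
        c i * c j * (u * Real.exp (-(∑ k, (p i k - p j k) ^ 2) / (4 * u ^ 2)))
          = u * (c i * c j * Real.exp (-(∑ k, (p i k - p j k) ^ 2) / (4 * u ^ 2))) :=
      fun i j => by ring
    simp only [hrw, ← Finset.mul_sum]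
    exact mul_nonneg h0.le (gauss_quad_nonneg c p (by positivity))
end

section
/- (Remark to Theorem 2.) Under the assumptions of Theorem 2, if additionally the weighted means agree, i.e. Σ_{i=1}^L w_i^x x_i^{(k)} = Σ_{i=1}^M w_i^y y_i^{(k)} for every k = 1, …, N, then D(b_max) converges, as b_max → ∞, to the b_max-independent limit (π^{N/2}/8)(D_y - 2 D_{xy} + D_x). -/
open MeasureTheory Real Filter

lemma gauss_key {b : ℝ} (hb : 0 < b) (a c m : ℝ) :
    Real.exp (-(a-m)^2/(2*b^2)) * Real.exp (-(c-m)^2/(2*b^2))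
      = Real.exp (-((a-c)^2)/(4*b^2)) * Real.exp (-(b^2)⁻¹ * (m - (a+c)/2)^2) := by
  rw [← Real.exp_add, ← Real.exp_add]
  congr 1
  have hb2 : (b:ℝ)^2 ≠ 0 := by positivity
  field_simp
  ring

lemma gauss_integrable {b : ℝ} (hb : 0 < b) (a c : ℝ) :
    Integrable (fun m : ℝ => Real.exp (-(a-m)^2/(2*b^2)) * Real.exp (-(c-m)^2/(2*b^2))) := by
  have h : (0:ℝ) < (b^2)⁻¹ := by positivity
  have := ((integrable_exp_neg_mul_sq h).comp_sub_right ((a+c)/2)).const_mul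
    (Real.exp (-((a-c)^2)/(4*b^2)))
  refine this.congr ?_
  filter_upwards with m
  rw [gauss_key hb a c m]

lemma gauss_int {b : ℝ} (hb : 0 < b) (a c : ℝ) :
    ∫ m : ℝ, Real.exp (-(a-m)^2/(2*b^2)) * Real.exp (-(c-m)^2/(2*b^2))
      = Real.sqrt Real.pi * b * Real.exp (-((a-c)^2)/(4*b^2)) := by
  have h : (0:ℝ) < (b^2)⁻¹ := by positivity
  simp only [gauss_key hb a c]
  rw [MeasureTheory.integral_const_mul]
  have := MeasureTheory.integral_sub_right_eq_self
    (μ := volume) (fun m : ℝ => Real.exp (-(b^2)⁻¹ * m^2)) ((a+c)/2)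
  rw [this, integral_gaussian]
  rw [div_inv_eq_mul, Real.sqrt_mul Real.pi_pos.le, Real.sqrt_sq hb.le]
  ring


lemma inner_int {N : ℕ} {b : ℝ} (hb : 0 < b) {ι : Type*} [Fintype ι]
    (w : ι → ℝ) (pt : ι → Fin N → ℝ) :
    ∫ m : Fin N → ℝ, (∑ i, w i * ∏ k, Real.exp (-(pt i k - m k)^2/(2*b^2)))^2
      = ∑ p : ι × ι, w p.1 * w p.2 *
          ((Real.sqrt Real.pi * b)^N * Real.exp (-(∑ k, (pt p.1 k - pt p.2 k)^2)/(4*b^2))) := by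
  have hfun : ∀ m : Fin N → ℝ,
      (∑ i, w i * ∏ k, Real.exp (-(pt i k - m k)^2/(2*b^2)))^2
        = ∑ p : ι × ι, (w p.1 * w p.2) *
            ∏ k, (Real.exp (-(pt p.1 k - m k)^2/(2*b^2)) * Real.exp (-(pt p.2 k - m k)^2/(2*b^2))) := by
    intro m
    rw [sq, Finset.sum_mul_sum, ← Finset.sum_product']
    refine Finset.sum_congr rfl fun p _ => ?_
    rw [Finset.prod_mul_distrib]
    ring
  simp_rw [hfun]
  rw [MeasureTheory.integral_finset_sum]
  · refine Finset.sum_congr rfl fun p _ => ?_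
    rw [MeasureTheory.integral_const_mul,
      MeasureTheory.integral_fintype_prod_volume_eq_prod (ι := Fin N)
        (f := fun k (t : ℝ) => Real.exp (-(pt p.1 k - t)^2/(2*b^2)) * Real.exp (-(pt p.2 k - t)^2/(2*b^2)))]
    congr 1
    simp_rw [fun k => gauss_int hb (pt p.1 k) (pt p.2 k)]
    rw [Finset.prod_mul_distrib, Finset.prod_const, ← Real.exp_sum, Finset.card_univ,
      Fintype.card_fin]
    congr 1
    rw [← Finset.sum_div, ← Finset.sum_neg_distrib]
  · intro p _
    exact (MeasureTheory.Integrable.fintype_prod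
      (f := fun k (t : ℝ) => Real.exp (-(pt p.1 k - t)^2/(2*b^2)) * Real.exp (-(pt p.2 k - t)^2/(2*b^2)))
      (fun k => gauss_integrable hb _ _)).const_mul _



noncomputable def psi (d c : ℝ) : ℝ → ℝ :=
  fun b => b * (Real.exp (-d/(4*b^2)) - 1) + Set.indicator (Set.Ici c) (fun b => d/(4*b)) b

lemma psi_meas (d c : ℝ) : Measurable (psi d c) := by
  unfold psi
  apply Measurable.add
  · fun_prop
  · exact Measurable.indicator (by fun_prop) measurableSet_Ici

lemma bound1 {d : ℝ} (hd : 0 ≤ d) {b : ℝ} (hb : 0 < b) :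
    |b * (Real.exp (-d/(4*b^2)) - 1)| ≤ b := by
  rw [abs_mul, abs_of_pos hb]
  have h1 : Real.exp (-d/(4*b^2)) ≤ 1 := by
    rw [Real.exp_le_one_iff, neg_div]
    exact neg_nonpos.2 (by positivity)
  have h2 : 0 < Real.exp (-d/(4*b^2)) := Real.exp_pos _
  have : |Real.exp (-d/(4*b^2)) - 1| ≤ 1 := by rw [abs_le]; constructor <;> linarith
  nlinarith [abs_nonneg (Real.exp (-d/(4*b^2)) - 1)]

lemma bound_ind {d c : ℝ} (hd : 0 ≤ d) (hc : 0 < c) (b : ℝ) :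
    |Set.indicator (Set.Ici c) (fun b => d/(4*b)) b| ≤ d/(4*c) := by
  rw [Set.indicator_apply]
  split_ifs with h
  · have hb : c ≤ b := h
    have hb0 : 0 < b := lt_of_lt_of_le hc hb
    rw [abs_of_nonneg (by positivity)]
    apply div_le_div_of_nonneg_left hd (by positivity)
    linarith
  · simpa using by positivity

lemma psi_integrableOn_Ioc (d c : ℝ) (hd : 0 ≤ d) (hc : 0 < c) (T : ℝ) :
    IntegrableOn (psi d c) (Set.Ioc 0 T) := by
  apply Integrable.mono' (integrable_const (max T 0 + d/(4*c)))
    ((psi_meas d c).aestronglyMeasurable.restrict)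
  filter_upwards [ae_restrict_mem measurableSet_Ioc] with b hb
  calc |psi d c b| ≤ |b * (Real.exp (-d/(4*b^2)) - 1)|
        + |Set.indicator (Set.Ici c) (fun b => d/(4*b)) b| := abs_add_le _ _
    _ ≤ max T 0 + d/(4*c) := by
        apply add_le_add ((bound1 hd hb.1).trans (le_max_of_le_left hb.2)) (bound_ind hd hc b)

lemma psi_tail_eq {d c b : ℝ} (hb : 0 < b) (hcb : c ≤ b) :
    psi d c b = b * (Real.exp (-d/(4*b^2)) - 1 + d/(4*b^2)) := by
  unfold psi
  rw [Set.indicator_of_mem (by exact hcb : b ∈ Set.Ici c)]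
  field_simp

lemma psi_integrableOn_Ioi (d c : ℝ) (hd : 0 ≤ d) (hc : 0 < c) :
    IntegrableOn (psi d c) (Set.Ioi 0) := by
  set B := max (Real.sqrt d) c with hB_def
  have hB : 0 < B := lt_of_lt_of_le hc (le_max_right _ _)
  rw [show Set.Ioi (0:ℝ) = Set.Ioc 0 B ∪ Set.Ioi B from (Set.Ioc_union_Ioi_eq_Ioi hB.le).symm]
  apply IntegrableOn.union (psi_integrableOn_Ioc d c hd hc B)
  have hmaj : IntegrableOn (fun b : ℝ => d^2/16 * b ^ (-3:ℝ)) (Set.Ioi B) :=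
    (integrableOn_Ioi_rpow_of_lt (by norm_num) hB).const_mul _
  apply Integrable.mono' hmaj ((psi_meas d c).aestronglyMeasurable.restrict)
  filter_upwards [ae_restrict_mem measurableSet_Ioi] with b hb
  have hb0 : 0 < b := hB.trans hb
  have hcb : c ≤ b := le_trans (le_max_right _ _) hb.le
  have hsb : Real.sqrt d ≤ b := le_trans (le_max_left _ _) hb.le
  have hdb : d ≤ b^2 := by
    calc d = Real.sqrt d ^ 2 := (Real.sq_sqrt hd).symm
    _ ≤ b^2 := by nlinarith [Real.sqrt_nonneg d]
  set u := d/(4*b^2) with hu_def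
  have hu0 : 0 ≤ u := by positivity
  have hu1 : u ≤ 1 := by
    rw [hu_def, div_le_one (by positivity)]; nlinarith
  have hexp : |Real.exp (-u) - 1 - (-u)| ≤ (-u)^2 :=
    Real.abs_exp_sub_one_sub_id_le (by rwa [abs_neg, abs_of_nonneg hu0])
  have hmain : |b * (Real.exp (-u) - 1 + u)| ≤ b * u^2 := by
    rw [abs_mul, abs_of_pos hb0]
    have h' : Real.exp (-u) - 1 + u = Real.exp (-u) - 1 - (-u) := by ring
    rw [h']
    apply mul_le_mul_of_nonneg_left (hexp.trans (by rw [neg_pow]; norm_num)) hb0.le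
  have hrw : b ^ (-3:ℝ) = (b^3)⁻¹ := by
    rw [Real.rpow_neg hb0.le]
    congr 1
    rw [show (3:ℝ) = ((3:ℕ):ℝ) by norm_num, Real.rpow_natCast]
  calc ‖psi d c b‖ = |b * (Real.exp (-u) - 1 + u)| := by
        rw [psi_tail_eq hb0 hcb, Real.norm_eq_abs, hu_def, neg_div]
    _ ≤ b * u^2 := hmain
    _ = d^2/16 * b ^ (-3:ℝ) := by
        rw [hrw, hu_def]
        field_simp
        all_goals ring

lemma k_integrableOn_Ioc (d T : ℝ) (hd : 0 ≤ d) :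
    IntegrableOn (fun b : ℝ => b * Real.exp (-d/(4*b^2))) (Set.Ioc 0 T) := by
  apply Integrable.mono' (integrable_const (max T 0))
    ((by fun_prop : Measurable fun b : ℝ => b * Real.exp (-d/(4*b^2)))).aestronglyMeasurable.restrict
  filter_upwards [ae_restrict_mem measurableSet_Ioc] with b hb
  have hb0 : 0 < b := hb.1
  have h1 : Real.exp (-d/(4*b^2)) ≤ 1 := by
    rw [Real.exp_le_one_iff, neg_div]
    exact neg_nonpos.2 (by positivity)
  rw [Real.norm_eq_abs, abs_mul, abs_of_pos hb0, abs_of_pos (Real.exp_pos _)]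
  calc b * Real.exp (-d/(4*b^2)) ≤ b * 1 := by nlinarith
    _ ≤ max T 0 := by rw [mul_one]; exact le_max_of_le_left hb.2

lemma ind_integrableOn_Ioc (d c T : ℝ) (hd : 0 ≤ d) (hc : 0 < c) :
    IntegrableOn (Set.indicator (Set.Ici c) (fun b : ℝ => d/(4*b))) (Set.Ioc 0 T) := by
  apply Integrable.mono' (integrable_const (d/(4*c)))
    ((Measurable.indicator (by fun_prop) measurableSet_Ici)).aestronglyMeasurable.restrict
  filter_upwards with b
  exact bound_ind hd hc b

lemma K_eq (d : ℝ) (hd : 0 ≤ d) {T : ℝ} (hT : 1 ≤ T) :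
    ∫ b in Set.Ioc 0 T, psi d 1 b
      = (∫ b in Set.Ioc 0 T, b * Real.exp (-d/(4*b^2))) - T^2/2 + d/4 * Real.log T := by
  have h0T : (0:ℝ) ≤ T := le_trans zero_le_one hT
  have hpw : ∀ b ∈ Set.Ioc (0:ℝ) T, psi d 1 b
      = (fun b => (b * Real.exp (-d/(4*b^2)) - b)
          + Set.indicator (Set.Ici 1) (fun b : ℝ => d/(4*b)) b) b := by
    intro b _
    unfold psi; ring_nf
  rw [setIntegral_congr_fun measurableSet_Ioc hpw]
  have hid : IntegrableOn (fun b : ℝ => b) (Set.Ioc 0 T) :=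
    continuous_id.integrableOn_Ioc
  have hfg : IntegrableOn (fun b : ℝ => b * Real.exp (-d/(4*b^2)) - b) (Set.Ioc 0 T) :=
    (k_integrableOn_Ioc d T hd).sub hid
  rw [integral_add hfg (ind_integrableOn_Ioc d 1 T hd one_pos),
    integral_sub (k_integrableOn_Ioc d T hd) hid]
  have h2 : ∫ b in Set.Ioc (0:ℝ) T, b = T^2/2 := by
    rw [← intervalIntegral.integral_of_le h0T, integral_id]
    norm_num
  have h3 : ∫ b in Set.Ioc (0:ℝ) T, Set.indicator (Set.Ici 1) (fun b : ℝ => d/(4*b)) b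
      = d/4 * Real.log T := by
    rw [setIntegral_indicator measurableSet_Ici]
    have hset : Set.Ioc (0:ℝ) T ∩ Set.Ici 1 = Set.Icc 1 T := by
      ext b
      simp only [Set.mem_inter_iff, Set.mem_Ioc, Set.mem_Ici, Set.mem_Icc]
      constructor
      · rintro ⟨⟨_, h2⟩, h3⟩; exact ⟨h3, h2⟩
      · rintro ⟨h1, h2⟩; exact ⟨⟨lt_of_lt_of_le one_pos h1, h2⟩, h1⟩
    rw [hset, MeasureTheory.integral_Icc_eq_integral_Ioc,
      ← intervalIntegral.integral_of_le hT]
    have : ∀ b : ℝ, d/(4*b) = (d/4) * b⁻¹ := fun b => by ring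
    simp_rw [this]
    rw [intervalIntegral.integral_const_mul, integral_inv_of_pos one_pos (lt_of_lt_of_le one_pos hT),
      div_one]
  rw [h2, h3]

lemma tendsto_Ioc_integral (d c : ℝ) (hd : 0 ≤ d) (hc : 0 < c) :
    Tendsto (fun T => ∫ b in Set.Ioc 0 T, psi d c b) atTop
      (nhds (∫ b in Set.Ioi 0, psi d c b)) := by
  have h := MeasureTheory.intervalIntegral_tendsto_integral_Ioi 0
    (psi_integrableOn_Ioi d c hd hc) tendsto_id
  apply h.congr'
  filter_upwards [eventually_ge_atTop (0:ℝ)] with T hT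
  simp only [id]
  rw [intervalIntegral.integral_of_le hT]

lemma psi_zero : psi 0 1 = fun _ => (0:ℝ) := by
  funext b
  simp [psi]

lemma ind_diff_integral {s : ℝ} (hs : 0 < s) :
    (Integrable (fun u => (Set.Ici s⁻¹).indicator (fun u : ℝ => 1/(4*u)) u
        - (Set.Ici 1).indicator (fun u : ℝ => 1/(4*u)) u)
        (volume.restrict (Set.Ioi 0)))
    ∧ ∫ u in Set.Ioi (0:ℝ), ((Set.Ici s⁻¹).indicator (fun u : ℝ => 1/(4*u)) u
        - (Set.Ici 1).indicator (fun u : ℝ => 1/(4*u)) u)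
      = 1/4 * Real.log s := by
  have hs' : 0 < s⁻¹ := inv_pos.2 hs
  have hint : ∀ a b : ℝ, 0 < a → IntegrableOn (fun u : ℝ => 1/(4*u)) (Set.Ico a b) := by
    intro a b ha
    have hco : ContinuousOn (fun u : ℝ => 1/(4*u)) (Set.Icc a b) := by
      apply ContinuousOn.div continuousOn_const (continuousOn_const.mul continuousOn_id)
      intro u hu
      have : 0 < u := lt_of_lt_of_le ha hu.1
      exact mul_ne_zero (by norm_num) this.ne'
    exact (hco.integrableOn_Icc).mono_set Set.Ico_subset_Icc_self
  have hval : ∀ a b : ℝ, 0 < a → a ≤ b →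
      ∫ u in Set.Ioi (0:ℝ), (Set.Ico a b).indicator (fun u : ℝ => 1/(4*u)) u
        = 1/4 * (Real.log b - Real.log a) := by
    intro a b ha hab
    rw [setIntegral_indicator measurableSet_Ico]
    have : Set.Ioi (0:ℝ) ∩ Set.Ico a b = Set.Ico a b :=
      Set.inter_eq_self_of_subset_right (fun u hu => lt_of_lt_of_le ha hu.1)
    rw [this, MeasureTheory.integral_Ico_eq_integral_Ioo, ← MeasureTheory.integral_Ioc_eq_integral_Ioo,
      ← intervalIntegral.integral_of_le hab]
    have hrw : ∀ u : ℝ, 1/(4*u) = (1/4) * u⁻¹ := fun u => by ring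
    simp_rw [hrw]
    rw [intervalIntegral.integral_const_mul,
      integral_inv_of_pos ha (lt_of_lt_of_le ha hab), Real.log_div (ne_of_gt (lt_of_lt_of_le ha hab)) (ne_of_gt ha)]
  by_cases hc : s⁻¹ ≤ 1
  · have hgeq : (fun u => (Set.Ici s⁻¹).indicator (fun u : ℝ => 1/(4*u)) u
        - (Set.Ici 1).indicator (fun u : ℝ => 1/(4*u)) u)
        = (Set.Ico s⁻¹ 1).indicator (fun u : ℝ => 1/(4*u)) := by
      funext u
      simp only [Set.indicator_apply, Set.mem_Ici, Set.mem_Ico]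
      by_cases h1 : s⁻¹ ≤ u <;> by_cases h2 : (1:ℝ) ≤ u
      · simp [h1, h2, not_lt.2 h2]
      · simp [h1, h2, lt_of_not_ge h2]
      · exact absurd (le_trans hc h2) h1
      · simp [h1, h2]
    rw [hgeq]
    refine ⟨((hint _ _ hs').integrable_indicator measurableSet_Ico).integrableOn, ?_⟩
    rw [hval _ _ hs' hc, Real.log_inv, Real.log_one]
    ring
  · push_neg at hc
    have hgeq : (fun u => (Set.Ici s⁻¹).indicator (fun u : ℝ => 1/(4*u)) u
        - (Set.Ici 1).indicator (fun u : ℝ => 1/(4*u)) u)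
        = fun u => -((Set.Ico 1 s⁻¹).indicator (fun u : ℝ => 1/(4*u)) u) := by
      funext u
      simp only [Set.indicator_apply, Set.mem_Ici, Set.mem_Ico]
      by_cases h1 : s⁻¹ ≤ u <;> by_cases h2 : (1:ℝ) ≤ u
      · simp [h1, h2, not_lt.2 h1]
      · exact absurd (le_trans hc.le h1) h2
      · simp [h1, h2, lt_of_not_ge h1]
      · simp [h1, h2]
    rw [hgeq]
    constructor
    · exact (((hint _ _ one_pos).integrable_indicator measurableSet_Ico).integrableOn).neg
    · rw [integral_neg, hval _ _ one_pos hc.le, Real.log_inv, Real.log_one]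
      ring

lemma integral_psi_closed {d : ℝ} (hd : 0 < d) :
    ∫ b in Set.Ioi 0, psi d 1 b
      = d * (∫ b in Set.Ioi 0, psi 1 1 b) + d/8 * Real.log d := by
  set s := Real.sqrt d with hs_def
  have hs : 0 < s := Real.sqrt_pos.2 hd
  have hs2 : s^2 = d := Real.sq_sqrt hd.le
  have h1 : ∫ u in Set.Ioi (0:ℝ), psi d 1 (s * u) = s⁻¹ * ∫ b in Set.Ioi 0, psi d 1 b := by
    have := MeasureTheory.integral_comp_mul_left_Ioi (psi d 1) 0 hs
    simpa [mul_zero, smul_eq_mul] using this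
  have h2 : ∀ u ∈ Set.Ioi (0:ℝ), psi d 1 (s * u) = s * psi 1 s⁻¹ u := by
    intro u hu
    have hu0 : (0:ℝ) < u := hu
    have hmem : s * u ∈ Set.Ici (1:ℝ) ↔ u ∈ Set.Ici s⁻¹ := by
      simp only [Set.mem_Ici]
      constructor
      · intro h
        nlinarith [mul_inv_cancel₀ (ne_of_gt hs), mul_nonneg (sub_nonneg.2 h) (inv_pos.2 hs).le]
      · intro h
        nlinarith [mul_inv_cancel₀ (ne_of_gt hs), mul_nonneg (sub_nonneg.2 h) hs.le]
    have hval2 : (Set.Ici (1:ℝ)).indicator (fun b => d/(4*b)) (s*u)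
        = s * (Set.Ici s⁻¹).indicator (fun u : ℝ => 1/(4*u)) u := by
      by_cases h : u ∈ Set.Ici s⁻¹
      · rw [Set.indicator_of_mem (hmem.2 h) _, Set.indicator_of_mem h]
        rw [← hs2]
        field_simp
      · rw [Set.indicator_of_notMem (fun hh => h (hmem.1 hh)), Set.indicator_of_notMem h, mul_zero]
    have harg : -d/(4*(s*u)^2) = -1/(4*u^2) := by
      rw [← hs2]
      rw [div_eq_div_iff (by positivity) (by positivity)]
      ring
    unfold psi
    rw [hval2, harg]
    ring
  have h3 : ∫ u in Set.Ioi (0:ℝ), psi d 1 (s*u) = s * ∫ u in Set.Ioi (0:ℝ), psi 1 s⁻¹ u := by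
    rw [setIntegral_congr_fun measurableSet_Ioi h2, MeasureTheory.integral_const_mul]
  have h4 : ∫ u in Set.Ioi (0:ℝ), psi 1 s⁻¹ u
      = (∫ u in Set.Ioi 0, psi 1 1 u) + 1/4 * Real.log s := by
    obtain ⟨hgint, hgval⟩ := ind_diff_integral hs
    have hpt : ∀ u : ℝ, psi 1 s⁻¹ u = psi 1 1 u
        + ((Set.Ici s⁻¹).indicator (fun u : ℝ => 1/(4*u)) u
            - (Set.Ici 1).indicator (fun u : ℝ => 1/(4*u)) u) := by
      intro u; unfold psi; ring
    simp_rw [hpt]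
    rw [integral_add (psi_integrableOn_Ioi 1 1 zero_le_one one_pos) hgint, hgval]
  have hI : ∫ b in Set.Ioi (0:ℝ), psi d 1 b
      = s * (s * ((∫ u in Set.Ioi (0:ℝ), psi 1 1 u) + 1/4 * Real.log s)) := by
    rw [← h4, ← h3, h1]
    field_simp
  rw [hI, Real.log_sqrt hd.le]
  have hss : s * s = d := Real.mul_self_sqrt hd.le
  calc s * (s * ((∫ u in Set.Ioi (0:ℝ), psi 1 1 u) + 1/4 * (Real.log d / 2)))
      = (s*s) * (∫ u in Set.Ioi (0:ℝ), psi 1 1 u) + (s*s)/8 * Real.log d := by ring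
    _ = d * (∫ u in Set.Ioi (0:ℝ), psi 1 1 u) + d/8 * Real.log d := by rw [hss]

noncomputable def Jconst : ℝ := ∫ b in Set.Ioi (0:ℝ), psi 1 1 b

lemma G_tendsto (d : ℝ) (hd : 0 ≤ d) :
    Tendsto (fun T => (∫ b in Set.Ioc 0 T, b * Real.exp (-d/(4*b^2))) - T^2/2 + d/4 * Real.log T)
      atTop (nhds (d * Jconst + d/8 * Real.log d)) := by
  have h := tendsto_Ioc_integral d 1 hd one_pos
  have heq : (fun T => ∫ b in Set.Ioc 0 T, psi d 1 b) =ᶠ[atTop]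
      (fun T => (∫ b in Set.Ioc 0 T, b * Real.exp (-d/(4*b^2))) - T^2/2 + d/4 * Real.log T) := by
    filter_upwards [eventually_ge_atTop (1:ℝ)] with T hT
    exact K_eq d hd hT
  have h' := h.congr' heq
  rcases eq_or_lt_of_le hd with h0 | h0
  · rw [← h0] at h' ⊢
    simpa [psi_zero] using h'
  · rw [Jconst]; rwa [integral_psi_closed h0] at h'

lemma main_sum_tendsto {ι : Type*} [Fintype ι] (c d : ι → ℝ) (hd : ∀ p, 0 ≤ d p)
    (hc0 : ∑ p, c p = 0) (hcd : ∑ p, c p * d p = 0)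
    (xlog : ℝ → ℝ) (hxlog0 : xlog 0 = 0) (hxlog : ∀ z, 0 < z → xlog z = z * Real.log z) :
    Tendsto (fun T : ℝ => ∑ p, c p * ∫ b in Set.Ioc 0 T, b * Real.exp (-(d p)/(4*b^2)))
      atTop (nhds ((1/8) * ∑ p, c p * xlog (d p))) := by
  have hlim : Tendsto (fun T : ℝ => ∑ p, c p *
      ((∫ b in Set.Ioc 0 T, b * Real.exp (-(d p)/(4*b^2))) - T^2/2 + (d p)/4 * Real.log T))
      atTop (nhds (∑ p, c p * (d p * Jconst + (d p)/8 * Real.log (d p)))) :=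
    tendsto_finset_sum _ (fun p _ => (G_tendsto (d p) (hd p)).const_mul (c p))
  have hfun : ∀ T : ℝ, ∑ p, c p *
      ((∫ b in Set.Ioc 0 T, b * Real.exp (-(d p)/(4*b^2))) - T^2/2 + (d p)/4 * Real.log T)
      = ∑ p, c p * ∫ b in Set.Ioc 0 T, b * Real.exp (-(d p)/(4*b^2)) := by
    intro T
    calc ∑ p, c p * ((∫ b in Set.Ioc 0 T, b * Real.exp (-(d p)/(4*b^2))) - T^2/2
            + (d p)/4 * Real.log T)
        = ∑ p, ((c p * ∫ b in Set.Ioc 0 T, b * Real.exp (-(d p)/(4*b^2)))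
            - (c p) * (T^2/2) + (c p * d p) * (Real.log T/4)) :=
          Finset.sum_congr rfl fun p _ => by ring
      _ = (∑ p, c p * ∫ b in Set.Ioc 0 T, b * Real.exp (-(d p)/(4*b^2)))
            - (∑ p, c p) * (T^2/2) + (∑ p, c p * d p) * (Real.log T/4) := by
          rw [Finset.sum_add_distrib, Finset.sum_sub_distrib, ← Finset.sum_mul, ← Finset.sum_mul]
      _ = ∑ p, c p * ∫ b in Set.Ioc 0 T, b * Real.exp (-(d p)/(4*b^2)) := by
          rw [hc0, hcd]; ring
  have hval : ∑ p, c p * (d p * Jconst + (d p)/8 * Real.log (d p))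
      = (1/8) * ∑ p, c p * xlog (d p) := by
    have hterm : ∀ p, c p * (d p * Jconst + (d p)/8 * Real.log (d p))
        = (c p * d p) * Jconst + (1/8) * (c p * xlog (d p)) := by
      intro p
      rcases eq_or_lt_of_le (hd p) with h0 | h0
      · rw [← h0]; simp [hxlog0]
      · rw [hxlog _ h0]; ring
    rw [Finset.sum_congr rfl (fun p _ => hterm p), Finset.sum_add_distrib, ← Finset.sum_mul,
      hcd, ← Finset.mul_sum]
    ring
  rw [← hval]
  exact hlim.congr hfun


theorem distance_limit_equal_means
    (N M L : ℕ) (hN : 1 ≤ N)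
    (y : Fin M → Fin N → ℝ) (wy : Fin M → ℝ) (hwy : ∀ i, 0 < wy i)
    (hsy : ∑ i, wy i = 1)
    (x : Fin L → Fin N → ℝ) (wx : Fin L → ℝ) (hwx : ∀ i, 0 < wx i)
    (hsx : ∑ i, wx i = 1)
    (hmeans : ∀ k : Fin N, ∑ i, wx i * x i k = ∑ i, wy i * y i k)
    (xlog : ℝ → ℝ) (hxlog0 : xlog 0 = 0)
    (hxlog : ∀ z : ℝ, 0 < z → xlog z = z * Real.log z) :
    Filter.Tendsto (fun bmax : ℝ =>
      ∫ b in Set.Ioc (0:ℝ) bmax, (1 / b ^ (N - 1)) *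
          ∫ m : Fin N → ℝ,
            ((∑ i, wy i * ∏ k, Real.exp (-(y i k - m k) ^ 2 / (2 * b ^ 2)))
              - ∑ i, wx i * ∏ k, Real.exp (-(x i k - m k) ^ 2 / (2 * b ^ 2))) ^ 2)
      Filter.atTop
      (nhds (Real.pi ^ ((N : ℝ) / 2) / 8 *
        ((∑ i, ∑ j, wy i * wy j * xlog (∑ k, (y i k - y j k) ^ 2))
          - 2 * ∑ i, ∑ j, wx i * wy j * xlog (∑ k, (x i k - y j k) ^ 2)
          + ∑ i, ∑ j, wx i * wx j * xlog (∑ k, (x i k - x j k) ^ 2)))) := by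
  classical
  set w : Fin M ⊕ Fin L → ℝ := Sum.elim wy (fun i => -wx i) with hw_def
  set pt : Fin M ⊕ Fin L → Fin N → ℝ := Sum.elim y x with hpt_def
  set c : (Fin M ⊕ Fin L) × (Fin M ⊕ Fin L) → ℝ := fun p => w p.1 * w p.2 with hc_def
  set dd : (Fin M ⊕ Fin L) × (Fin M ⊕ Fin L) → ℝ :=
    fun p => ∑ k, (pt p.1 k - pt p.2 k)^2 with hdd_def
  have hW : ∑ i, w i = 0 := by
    rw [Fintype.sum_sum_type]
    simp [hw_def, hsy, hsx]
  have hS : ∀ k, ∑ i, w i * pt i k = 0 := by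
    intro k
    rw [Fintype.sum_sum_type]
    simp only [hw_def, hpt_def, Sum.elim_inl, Sum.elim_inr, neg_mul]
    rw [Finset.sum_neg_distrib, hmeans k]
    ring
  have hdnn : ∀ p, 0 ≤ dd p := fun p => Finset.sum_nonneg fun k _ => sq_nonneg _
  have hc0 : ∑ p, c p = 0 := by
    rw [Fintype.sum_prod_type, ← Finset.sum_mul_sum]
    · rw [hW, zero_mul]
  have hcd : ∑ p, c p * dd p = 0 := by
    have hk : ∀ k : Fin N, ∑ i, ∑ j, w i * w j * (pt i k - pt j k)^2 = 0 := by
      intro k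
      have inner : ∀ i, ∑ j, w i * w j * (pt i k - pt j k)^2
          = w i * (∑ j, w j * pt j k ^2) := by
        intro i
        have expand : ∀ j, w i * w j * (pt i k - pt j k)^2
            = (w i * pt i k ^2) * w j - (2 * (w i * pt i k)) * (w j * pt j k)
              + w i * (w j * pt j k ^2) := fun j => by ring
        rw [Finset.sum_congr rfl fun j _ => expand j]
        rw [Finset.sum_add_distrib, Finset.sum_sub_distrib, ← Finset.mul_sum, ← Finset.mul_sum,
          ← Finset.mul_sum, hW, hS k]
        ring
      rw [Finset.sum_congr rfl fun i _ => inner i, ← Finset.sum_mul, hW, zero_mul]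
    calc ∑ p, c p * dd p = ∑ i, ∑ j, ∑ k, w i * w j * (pt i k - pt j k)^2 := by
          rw [Fintype.sum_prod_type]
          exact Finset.sum_congr rfl fun i _ => Finset.sum_congr rfl fun j _ => by
            rw [hc_def, hdd_def, Finset.mul_sum]
      _ = ∑ i, ∑ k : Fin N, ∑ j, w i * w j * (pt i k - pt j k)^2 :=
          Finset.sum_congr rfl fun i _ => Finset.sum_comm
      _ = ∑ k : Fin N, ∑ i, ∑ j, w i * w j * (pt i k - pt j k)^2 := Finset.sum_comm
      _ = 0 := Finset.sum_eq_zero fun k _ => hk k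
  have hfun : ∀ T : ℝ, (∫ b in Set.Ioc (0:ℝ) T, (1 / b ^ (N - 1)) *
          ∫ m : Fin N → ℝ,
            ((∑ i, wy i * ∏ k, Real.exp (-(y i k - m k) ^ 2 / (2 * b ^ 2)))
              - ∑ i, wx i * ∏ k, Real.exp (-(x i k - m k) ^ 2 / (2 * b ^ 2))) ^ 2)
      = Real.pi ^ ((N:ℝ)/2) * ∑ p, c p * ∫ b in Set.Ioc (0:ℝ) T, b * Real.exp (-(dd p)/(4*b^2)) := by
    intro T
    have hpw : ∀ b ∈ Set.Ioc (0:ℝ) T, (1 / b ^ (N - 1)) *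
          (∫ m : Fin N → ℝ,
            ((∑ i, wy i * ∏ k, Real.exp (-(y i k - m k) ^ 2 / (2 * b ^ 2)))
              - ∑ i, wx i * ∏ k, Real.exp (-(x i k - m k) ^ 2 / (2 * b ^ 2))) ^ 2)
        = Real.pi ^ ((N:ℝ)/2) * ∑ p, c p * (b * Real.exp (-(dd p)/(4*b^2))) := by
      intro b hb
      have hb0 : 0 < b := hb.1
      have hsum : ∀ m : Fin N → ℝ,
          ((∑ i, wy i * ∏ k, Real.exp (-(y i k - m k)^2/(2*b^2)))
            - ∑ i, wx i * ∏ k, Real.exp (-(x i k - m k)^2/(2*b^2)))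
          = ∑ i, w i * ∏ k, Real.exp (-(pt i k - m k)^2/(2*b^2)) := by
        intro m
        rw [Fintype.sum_sum_type]
        have e1 : ∑ i : Fin M, w (Sum.inl i) * ∏ k, Real.exp (-(pt (Sum.inl i) k - m k)^2/(2*b^2))
            = ∑ i, wy i * ∏ k, Real.exp (-(y i k - m k)^2/(2*b^2)) :=
          Finset.sum_congr rfl fun i _ => by simp [hw_def, hpt_def]
        have e2 : ∑ i : Fin L, w (Sum.inr i) * ∏ k, Real.exp (-(pt (Sum.inr i) k - m k)^2/(2*b^2))
            = -∑ i, wx i * ∏ k, Real.exp (-(x i k - m k)^2/(2*b^2)) := by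
          rw [← Finset.sum_neg_distrib]
          exact Finset.sum_congr rfl fun i _ => by simp [hw_def, hpt_def]
        rw [e1, e2]
        ring
      simp_rw [hsum]
      rw [inner_int hb0 w pt, Finset.mul_sum, Finset.mul_sum]
      refine Finset.sum_congr rfl fun p _ => ?_
      have hbN : (b:ℝ) ^ N = b^(N-1) * b := by
        rw [← pow_succ]
        congr 1
        omega
      have hpi : (Real.sqrt Real.pi)^N = Real.pi ^ ((N:ℝ)/2) := by
        rw [Real.sqrt_eq_rpow, ← Real.rpow_natCast (Real.pi ^ ((1:ℝ)/2)) N,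
          ← Real.rpow_mul Real.pi_pos.le]
        congr 1
        ring
      rw [mul_pow, hbN, hpi, hc_def, hdd_def]
      have hbne : (b:ℝ)^(N-1) ≠ 0 := by positivity
      field_simp
    rw [setIntegral_congr_fun measurableSet_Ioc hpw, MeasureTheory.integral_const_mul]
    congr 1
    have hint : ∀ p ∈ (Finset.univ : Finset ((Fin M ⊕ Fin L) × (Fin M ⊕ Fin L))),
        Integrable (fun b : ℝ => c p * (b * Real.exp (-(dd p)/(4*b^2))))
          (volume.restrict (Set.Ioc 0 T)) :=
      fun p _ => ((k_integrableOn_Ioc (dd p) T (hdnn p)).const_mul (c p))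
    rw [MeasureTheory.integral_finset_sum Finset.univ hint]
    exact Finset.sum_congr rfl fun p _ => MeasureTheory.integral_const_mul _ _
  have hval : ∑ p, c p * xlog (dd p)
      = (∑ i, ∑ j, wy i * wy j * xlog (∑ k, (y i k - y j k) ^ 2))
          - 2 * ∑ i, ∑ j, wx i * wy j * xlog (∑ k, (x i k - y j k) ^ 2)
          + ∑ i, ∑ j, wx i * wx j * xlog (∑ k, (x i k - x j k) ^ 2) := by
    have h1 : ∀ i : Fin M, ∑ j : Fin M ⊕ Fin L, c (Sum.inl i, j) * xlog (dd (Sum.inl i, j))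
        = (∑ j, wy i * wy j * xlog (∑ k, (y i k - y j k)^2))
          - ∑ j, wy i * wx j * xlog (∑ k, (y i k - x j k)^2) := by
      intro i
      rw [Fintype.sum_sum_type, sub_eq_add_neg, ← Finset.sum_neg_distrib]
      exact congrArg₂ (· + ·)
        (Finset.sum_congr rfl fun j _ => by simp [hc_def, hdd_def, hw_def, hpt_def])
        (Finset.sum_congr rfl fun j _ => by simp [hc_def, hdd_def, hw_def, hpt_def])
    have h2 : ∀ i : Fin L, ∑ j : Fin M ⊕ Fin L, c (Sum.inr i, j) * xlog (dd (Sum.inr i, j))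
        = -(∑ j, wx i * wy j * xlog (∑ k, (x i k - y j k)^2))
          + ∑ j, wx i * wx j * xlog (∑ k, (x i k - x j k)^2) := by
      intro i
      rw [Fintype.sum_sum_type, ← Finset.sum_neg_distrib]
      exact congrArg₂ (· + ·)
        (Finset.sum_congr rfl fun j _ => by simp [hc_def, hdd_def, hw_def, hpt_def])
        (Finset.sum_congr rfl fun j _ => by simp [hc_def, hdd_def, hw_def, hpt_def])
    have hBC : ∑ i : Fin M, ∑ j : Fin L, wy i * wx j * xlog (∑ k, (y i k - x j k)^2)
        = ∑ i : Fin L, ∑ j : Fin M, wx i * wy j * xlog (∑ k, (x i k - y j k)^2) := by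
      rw [Finset.sum_comm]
      refine Finset.sum_congr rfl fun j _ => Finset.sum_congr rfl fun i _ => ?_
      have hsq : ∑ k, (y i k - x j k)^2 = ∑ k, (x j k - y i k)^2 :=
        Finset.sum_congr rfl fun k _ => by ring
      rw [hsq]
      ring
    rw [Fintype.sum_prod_type, Fintype.sum_sum_type,
      Finset.sum_congr rfl (fun i _ => h1 i), Finset.sum_congr rfl (fun i _ => h2 i),
      Finset.sum_sub_distrib, Finset.sum_add_distrib, Finset.sum_neg_distrib, hBC]
    ring
  have hmain := (main_sum_tendsto c dd hdnn hc0 hcd xlog hxlog0 hxlog).const_mul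
    (Real.pi ^ ((N:ℝ)/2))
  have hgoalval : Real.pi ^ ((N:ℝ)/2) / 8 *
        ((∑ i, ∑ j, wy i * wy j * xlog (∑ k, (y i k - y j k) ^ 2))
          - 2 * ∑ i, ∑ j, wx i * wy j * xlog (∑ k, (x i k - y j k) ^ 2)
          + ∑ i, ∑ j, wx i * wx j * xlog (∑ k, (x i k - x j k) ^ 2))
      = Real.pi ^ ((N:ℝ)/2) * ((1/8) * ∑ p, c p * xlog (dd p)) := by
    rw [hval]
    ring
  rw [hgoalval]
  exact Tendsto.congr (fun T => (hfun T).symm) hmain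
end

section
/- (Theorem 3, exact gradient of the distance.) Fix N ≥ 1, b_max > 0, points y_1, …, y_M ∈ ℝ^N with positive weights w_i^y, and weights w_1^x, …, w_L^x > 0. Regard D as a function of the locations x_1, …, x_L ∈ ℝ^N via D(x) = ∫_0^{b_max} b^{-(N-1)} ∫_{ℝ^N} (F̃(m,b) - F(m,b))² dm db. Fix indices ξ ∈ {1,…,L} and η ∈ {1,…,N}, and suppose that at the point under consideration x_ξ ≠ y_i for all i = 1,…,M and x_ξ ≠ x_i for all i ≠ ξ. Then the partial derivative of D with respect to the coordinate x_ξ^{(η)} exists and equals (π^{N/2}/2) · w_ξ^x · [ Σ_{i=1}^L w_i^x (x_ξ^{(η)} - x_i^{(η)}) · Ei(-‖x_ξ - x_i‖²/(4 b_max²)) - Σ_{i=1}^M w_i^y (x_ξ^{(η)} - y_i^{(η)}) · Ei(-‖x_ξ - y_i‖²/(4 b_max²)) ], where the i = ξ term in the first sum is interpreted as 0. -/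
open MeasureTheory Real

-- 1D gaussian pair lemma
lemma gauss_pair_integrable (b : ℝ) (hb : 0 < b) (a c : ℝ) :
    Integrable (fun x : ℝ => Real.exp (-(a-x)^2/(2*b^2)) * Real.exp (-(c-x)^2/(2*b^2))) := by
  have key : ∀ x : ℝ, Real.exp (-(a-x)^2/(2*b^2)) * Real.exp (-(c-x)^2/(2*b^2))
      = Real.exp (-(a-c)^2/(4*b^2)) * Real.exp (-(1/b^2) * (x - (a+c)/2)^2) := by
    intro x
    rw [← Real.exp_add, ← Real.exp_add]
    congr 1
    field_simp
    ring
  simp_rw [key]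
  exact ((integrable_exp_neg_mul_sq (by positivity : (0:ℝ) < 1/b^2)).comp_sub_right
    ((a+c)/2)).const_mul _

lemma gauss_pair (b : ℝ) (hb : 0 < b) (a c : ℝ) :
    ∫ x : ℝ, Real.exp (-(a-x)^2/(2*b^2)) * Real.exp (-(c-x)^2/(2*b^2))
      = Real.sqrt π * b * Real.exp (-(a-c)^2/(4*b^2)) := by
  have key : ∀ x : ℝ, Real.exp (-(a-x)^2/(2*b^2)) * Real.exp (-(c-x)^2/(2*b^2))
      = Real.exp (-(a-c)^2/(4*b^2)) * Real.exp (-(1/b^2) * (x - (a+c)/2)^2) := by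
    intro x
    rw [← Real.exp_add, ← Real.exp_add]
    congr 1
    field_simp
    ring
  simp_rw [key]
  rw [MeasureTheory.integral_const_mul]
  rw [integral_sub_right_eq_self (μ := volume) (fun x => Real.exp (-(1/b^2) * x^2)) ((a+c)/2)]
  rw [integral_gaussian]
  rw [show π / (1/b^2) = π * b^2 by field_simp]
  rw [Real.sqrt_mul pi_nonneg, Real.sqrt_sq hb.le]
  ring



lemma gaussN_integrable (N : ℕ) (b : ℝ) (hb : 0 < b) (p q : Fin N → ℝ) :
    Integrable (fun m : Fin N → ℝ =>
      (∏ k, Real.exp (-(p k - m k)^2/(2*b^2))) * (∏ k, Real.exp (-(q k - m k)^2/(2*b^2)))) := by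
  have : ∀ m : Fin N → ℝ, (∏ k, Real.exp (-(p k - m k)^2/(2*b^2)))
      * (∏ k, Real.exp (-(q k - m k)^2/(2*b^2)))
      = ∏ k, (Real.exp (-(p k - m k)^2/(2*b^2)) * Real.exp (-(q k - m k)^2/(2*b^2))) := by
    intro m; rw [Finset.prod_mul_distrib]
  simp_rw [this]
  exact Integrable.fintype_prod (fun k => gauss_pair_integrable b hb (p k) (q k))

lemma gauss_pairN (N : ℕ) (b : ℝ) (hb : 0 < b) (p q : Fin N → ℝ) :
    ∫ m : Fin N → ℝ,
      (∏ k, Real.exp (-(p k - m k)^2/(2*b^2))) * (∏ k, Real.exp (-(q k - m k)^2/(2*b^2)))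
      = (Real.sqrt π * b)^N * Real.exp (-(∑ k, (p k - q k)^2)/(4*b^2)) := by
  have : ∀ m : Fin N → ℝ, (∏ k, Real.exp (-(p k - m k)^2/(2*b^2)))
      * (∏ k, Real.exp (-(q k - m k)^2/(2*b^2)))
      = ∏ k, (Real.exp (-(p k - m k)^2/(2*b^2)) * Real.exp (-(q k - m k)^2/(2*b^2))) := by
    intro m; rw [Finset.prod_mul_distrib]
  simp_rw [this]
  rw [volume_pi, integral_fintype_prod_eq_prod
    (fun k x => Real.exp (-(p k - x)^2/(2*b^2)) * Real.exp (-(q k - x)^2/(2*b^2)))]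
  have : ∀ k, (∫ x : ℝ, Real.exp (-(p k - x)^2/(2*b^2)) * Real.exp (-(q k - x)^2/(2*b^2)))
      = Real.sqrt π * b * Real.exp (-(p k - q k)^2/(4*b^2)) := fun k => gauss_pair b hb _ _
  rw [Finset.prod_congr rfl (fun k _ => this k), Finset.prod_mul_distrib,
    Finset.prod_const, ← Real.exp_sum]
  congr 2
  · simp [Finset.card_univ]
  · rw [← Finset.sum_div, ← Finset.sum_neg_distrib]



lemma inner_integral {P : Type*} [Fintype P] (N : ℕ) (b : ℝ) (hb : 0 < b)
    (c : P → ℝ) (z : P → Fin N → ℝ) :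
    ∫ m : Fin N → ℝ, (∑ p, c p * ∏ k, Real.exp (-(z p k - m k)^2/(2*b^2)))^2
      = ∑ p, ∑ q, c p * c q *
          ((Real.sqrt π * b)^N * Real.exp (-(∑ k, (z p k - z q k)^2)/(4*b^2))) := by
  have expand : ∀ m : Fin N → ℝ,
      (∑ p, c p * ∏ k, Real.exp (-(z p k - m k)^2/(2*b^2)))^2
      = ∑ p, ∑ q, c p * c q *
          ((∏ k, Real.exp (-(z p k - m k)^2/(2*b^2)))
            * (∏ k, Real.exp (-(z q k - m k)^2/(2*b^2)))) := by
    intro m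
    rw [sq, Finset.sum_mul_sum]
    refine Finset.sum_congr rfl fun p _ => Finset.sum_congr rfl fun q _ => by ring
  simp_rw [expand]
  rw [integral_finset_sum]
  · refine Finset.sum_congr rfl fun p _ => ?_
    rw [integral_finset_sum]
    · refine Finset.sum_congr rfl fun q _ => ?_
      rw [MeasureTheory.integral_const_mul, gauss_pairN N b hb]
    · exact fun q _ => ((gaussN_integrable N b hb (z p) (z q)).const_mul _)
  · exact fun p _ => integrable_finset_sum _
      (fun q _ => ((gaussN_integrable N b hb (z p) (z q)).const_mul _))


lemma subst_lemma (bmax c : ℝ) (hb : 0 < bmax) (hc : 0 < c) :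
    ∫ s in Set.Ioi (c/(4*bmax^2)), Real.exp (-s)/s
      = ∫ b in Set.Ioc (0:ℝ) bmax, (2/b) * Real.exp (-c/(4*b^2)) := by
  have hz : 0 < c/(4*bmax^2) := by positivity
  have himg : (fun b => c/(4*b^2)) '' Set.Ioo 0 bmax = Set.Ioi (c/(4*bmax^2)) := by
    ext s
    constructor
    · rintro ⟨b, ⟨hb0, hbm⟩, rfl⟩
      have : 4*b^2 < 4*bmax^2 := by nlinarith
      exact Set.mem_Ioi.2 (div_lt_div_of_pos_left hc (by positivity) this)
    · intro hs
      rw [Set.mem_Ioi] at hs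
      have hs0 : 0 < s := hz.trans hs
      refine ⟨Real.sqrt (c/(4*s)), ⟨Real.sqrt_pos.2 (by positivity), ?_⟩, ?_⟩
      · have h1 : c/(4*s) < bmax^2 := by
          rw [div_lt_iff₀ (by positivity)]
          rw [div_lt_iff₀ (by positivity)] at hs
          nlinarith
        calc Real.sqrt (c/(4*s)) < Real.sqrt (bmax^2) :=
              (Real.sqrt_lt_sqrt (by positivity) h1)
          _ = bmax := Real.sqrt_sq hb.le
      · show c / (4 * Real.sqrt (c/(4*s)) ^ 2) = s
        rw [Real.sq_sqrt (by positivity)]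
        field_simp
  have hderiv : ∀ b ∈ Set.Ioo (0:ℝ) bmax,
      HasDerivWithinAt (fun b => c/(4*b^2)) (-(c/(2*b^3))) (Set.Ioo 0 bmax) b := by
    intro b hb'
    have hb0 : b ≠ 0 := ne_of_gt hb'.1
    have : HasDerivAt (fun b : ℝ => c/(4*b^2))
        ((0 * (4*b^2) - c * (4*(2*b^1*1)))/(4*b^2)^2) b := by
      exact (hasDerivAt_const b c).div (((hasDerivAt_id b).pow 2).const_mul 4)
        (by positivity)
    have e : (0 * (4*b^2) - c * (4*(2*b^1*1)))/(4*b^2)^2 = -(c/(2*b^3)) := by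
      field_simp; ring
    exact (e ▸ this).hasDerivWithinAt
  have hinj : Set.InjOn (fun b => c/(4*b^2)) (Set.Ioo 0 bmax) := by
    intro a ha b hb' h
    simp only at h
    have ha0 : (0:ℝ) < a := ha.1
    have hb0 : (0:ℝ) < b := hb'.1
    field_simp at h
    nlinarith [h, ha0, hb0]
  have := integral_image_eq_integral_abs_deriv_smul (measurableSet_Ioo)
    hderiv hinj (fun s => Real.exp (-s)/s)
  rw [himg] at this
  rw [this]
  rw [MeasureTheory.integral_Ioc_eq_integral_Ioo]
  refine setIntegral_congr_fun measurableSet_Ioo (fun b hb' => ?_)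
  have hb0 : (0:ℝ) < b := hb'.1
  have : |(-(c/(2*b^3)))| = c/(2*b^3) := by
    rw [abs_neg, abs_of_pos (by positivity)]
  rw [smul_eq_mul, this, neg_div]
  field_simp
  ring




-- exp(-u) ≤ 1/√u for u > 0
lemma exp_neg_le_inv_sqrt {u : ℝ} (hu : 0 < u) : Real.exp (-u) ≤ 1 / Real.sqrt u := by
  have h1 : Real.sqrt u ≤ Real.exp u := by
    have h2 : Real.sqrt u ≤ 1 + u := by
      nlinarith [Real.sq_sqrt hu.le, Real.sqrt_nonneg u, sq_nonneg (Real.sqrt u - 1)]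
    exact h2.trans (by linarith [Real.add_one_le_exp u])
  rw [Real.exp_neg, ← one_div]
  exact one_div_le_one_div_of_le (Real.sqrt_pos.2 hu) h1

-- quadratic lower bound on the ball
lemma quad_lb {v R h : ℝ} (hR : 0 ≤ R) (h4 : h^2 ≤ (v^2 + R)/4) :
    (v^2 + R)/4 ≤ (v+h)^2 + R := by
  nlinarith [sq_nonneg (v + 2*h), sq_nonneg h]

lemma key_hasDerivAt (bmax : ℝ) (hb : 0 < bmax) (v R t₀ : ℝ) (hR : 0 ≤ R)
    (hc : 0 < (t₀ - v)^2 + R) :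
    HasDerivAt (fun t => ∫ b in Set.Ioc (0:ℝ) bmax, b * Real.exp (-((t - v)^2 + R)/(4*b^2)))
      ((t₀ - v)/4 * negEi (((t₀ - v)^2 + R)/(4*bmax^2))) t₀ := by
  set c : ℝ := (t₀ - v)^2 + R with hcdef
  set ε : ℝ := Real.sqrt c / 2 with hεdef
  have hε : 0 < ε := by positivity
  set F : ℝ → ℝ → ℝ := fun t b => b * Real.exp (-((t - v)^2 + R)/(4*b^2)) with hF
  set F' : ℝ → ℝ → ℝ := fun t b =>
    b * (Real.exp (-((t - v)^2 + R)/(4*b^2)) * (-(t - v)/(2*b^2))) with hF'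
  have hmeasF : ∀ t, AEStronglyMeasurable (F t) (volume.restrict (Set.Ioc 0 bmax)) := by
    intro t
    apply Measurable.aestronglyMeasurable
    apply Measurable.mul measurable_id
    apply Real.measurable_exp.comp
    exact (measurable_const.div ((measurable_id.pow_const 2).const_mul 4))
  have hmeasF' : AEStronglyMeasurable (F' t₀) (volume.restrict (Set.Ioc 0 bmax)) := by
    apply Measurable.aestronglyMeasurable
    apply Measurable.mul measurable_id
    apply Measurable.mul
    · exact Real.measurable_exp.comp
        (measurable_const.div ((measurable_id.pow_const 2).const_mul 4))
    · exact measurable_const.div ((measurable_id.pow_const 2).const_mul 2)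
  have hintF : Integrable (F t₀) (volume.restrict (Set.Ioc 0 bmax)) := by
    refine Integrable.mono' (integrable_const bmax) (hmeasF t₀) ?_
    filter_upwards [ae_restrict_mem measurableSet_Ioc] with b hb'
    rw [Real.norm_eq_abs, abs_mul, abs_of_pos hb'.1, abs_of_pos (Real.exp_pos _)]
    calc b * Real.exp (-((t₀ - v)^2 + R)/(4*b^2)) ≤ b * 1 := by
          apply mul_le_mul_of_nonneg_left _ hb'.1.le
          apply Real.exp_le_one_iff.2
          have h0 : 0 ≤ ((t₀ - v)^2 + R)/(4*b^2) := by positivity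
          rw [neg_div]
          linarith
      _ ≤ bmax := by rw [mul_one]; exact hb'.2
  have h_diff : ∀ᵐ b ∂(volume.restrict (Set.Ioc (0:ℝ) bmax)), ∀ t ∈ Metric.ball t₀ ε,
      HasDerivAt (fun t => F t b) (F' t b) t := by
    filter_upwards [ae_restrict_mem measurableSet_Ioc] with b hb'
    intro t _
    have hb0 : (0:ℝ) < b := hb'.1
    show HasDerivAt (fun t => b * Real.exp (-((t - v)^2 + R)/(4*b^2)))
      (b * (Real.exp (-((t - v)^2 + R)/(4*b^2)) * (-(t - v)/(2*b^2)))) t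
    have h1 : HasDerivAt (fun t : ℝ => ((t - v)^2 + R)) ((2:ℕ)*(t-v)^(2-1)*1) t :=
      (((hasDerivAt_id t).sub_const v).pow 2).add_const R
    have h2 := (h1.neg.div_const (4*b^2)).exp.const_mul b
    norm_num at h2
    convert h2 using 2
    · rfl
    · rfl
    · ring_nf
    have hb0' : b ≠ 0 := ne_of_gt hb0
    field_simp
    ring
  have h_bound : ∀ᵐ b ∂(volume.restrict (Set.Ioc (0:ℝ) bmax)), ∀ t ∈ Metric.ball t₀ ε,
      ‖F' t b‖ ≤ (|t₀ - v| + ε) * (2 / Real.sqrt c) := by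
    filter_upwards [ae_restrict_mem measurableSet_Ioc] with b hb'
    intro t ht
    have hb0 : (0:ℝ) < b := hb'.1
    have htt : |t - t₀| < ε := by
      rw [Metric.mem_ball, Real.dist_eq] at ht; exact ht
    have hd : c/4 ≤ (t - v)^2 + R := by
      have h4 : (t - t₀)^2 ≤ ((t₀ - v)^2 + R)/4 := by
        have : (t - t₀)^2 ≤ ε^2 := by
          rw [← sq_abs]
          exact pow_le_pow_left₀ (abs_nonneg _) htt.le 2
        have hε2 : ε^2 = c/4 := by
          rw [hεdef, div_pow, Real.sq_sqrt hc.le]; norm_num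
        rw [← hcdef]; linarith [this, hε2 ▸ this]
      have := quad_lb (v := t₀ - v) (R := R) hR h4
      calc c/4 = ((t₀-v)^2 + R)/4 := by rw [hcdef]
        _ ≤ ((t₀-v) + (t-t₀))^2 + R := this
        _ = (t - v)^2 + R := by ring_nf
    have hdpos : 0 < (t - v)^2 + R := lt_of_lt_of_le (by positivity) hd
    have hexp : Real.exp (-((t - v)^2 + R)/(4*b^2)) ≤ 4*b/Real.sqrt c := by
      have hu : 0 < ((t - v)^2 + R)/(4*b^2) := by positivity
      have h5 : Real.exp (-(((t - v)^2 + R)/(4*b^2))) ≤ 1/Real.sqrt (((t - v)^2 + R)/(4*b^2)) :=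
        exp_neg_le_inv_sqrt hu
      have hsqeq : Real.sqrt (((t - v)^2 + R)/(4*b^2))
          = Real.sqrt ((t - v)^2 + R) / (2*b) := by
        rw [Real.sqrt_div (by positivity) (4*b^2), show (4*b^2) = (2*b)^2 by ring,
          Real.sqrt_sq (by positivity)]
      have hsc : Real.sqrt c / 2 ≤ Real.sqrt ((t - v)^2 + R) := by
        have h7 : Real.sqrt (c/4) ≤ Real.sqrt ((t - v)^2 + R) := Real.sqrt_le_sqrt hd
        have h8 : Real.sqrt (c/4) = Real.sqrt c / 2 := by
          rw [Real.sqrt_div hc.le 4, show Real.sqrt 4 = 2 by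
            rw [show (4:ℝ) = 2^2 by norm_num, Real.sqrt_sq (by norm_num)]]
        linarith [h8 ▸ h7]
      have hsd : 0 < Real.sqrt ((t - v)^2 + R) := Real.sqrt_pos.2 hdpos
      have hsc0 : 0 < Real.sqrt c := Real.sqrt_pos.2 hc
      calc Real.exp (-((t - v)^2 + R)/(4*b^2))
          = Real.exp (-(((t - v)^2 + R)/(4*b^2))) := by rw [neg_div]
        _ ≤ 1/Real.sqrt (((t - v)^2 + R)/(4*b^2)) := h5
        _ = 2*b/Real.sqrt ((t - v)^2 + R) := by rw [hsqeq]; field_simp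
        _ ≤ 4*b/Real.sqrt c := by
            rw [div_le_div_iff₀ hsd hsc0]
            nlinarith [hsc, hb0]
    have hXle : |t - v| ≤ |t₀ - v| + ε := by
      calc |t - v| = |(t₀ - v) + (t - t₀)| := by ring_nf
        _ ≤ |t₀ - v| + |t - t₀| := abs_add_le _ _
        _ ≤ |t₀ - v| + ε := by linarith [htt.le]
    have hsc0 : 0 < Real.sqrt c := Real.sqrt_pos.2 hc
    have hEnn : 0 < Real.exp (-((t - v)^2 + R)/(4*b^2)) := Real.exp_pos _
    have hnorm : ‖F' t b‖
        = Real.exp (-((t - v)^2 + R)/(4*b^2)) * |t - v| / (2*b) := by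
      rw [hF']
      rw [Real.norm_eq_abs, abs_mul, abs_mul, abs_of_pos hb0, abs_of_pos hEnn,
        abs_div, abs_neg, abs_of_pos (by positivity : (0:ℝ) < 2*b^2)]
      field_simp
    rw [hnorm]
    rw [div_le_iff₀ (by positivity : (0:ℝ) < 2*b)]
    have hEs : Real.exp (-((t - v)^2 + R)/(4*b^2)) * Real.sqrt c ≤ 4*b :=
      (le_div_iff₀ hsc0).mp hexp
    have h2s : (|t₀ - v| + ε) * (2 / Real.sqrt c) * (2*b)
        = (|t₀ - v| + ε) * (4*b) / Real.sqrt c := by field_simp; ring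
    rw [h2s, le_div_iff₀ hsc0]
    nlinarith [mul_le_mul_of_nonneg_right hEs (abs_nonneg (t - v)),
      mul_le_mul_of_nonneg_left hXle (by positivity : (0:ℝ) ≤ 4*b), hEnn.le]
  have bound_int : Integrable (fun _ : ℝ => (|t₀ - v| + ε) * (2 / Real.sqrt c))
      (volume.restrict (Set.Ioc 0 bmax)) := by
    apply integrable_const
  obtain ⟨-, hder⟩ := hasDerivAt_integral_of_dominated_loc_of_deriv_le (Metric.ball_mem_nhds t₀ hε)
    (Filter.Eventually.of_forall fun t => hmeasF t) hintF hmeasF' h_bound bound_int h_diff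
  have hval : (∫ b in Set.Ioc (0:ℝ) bmax, F' t₀ b)
      = (t₀ - v)/4 * negEi (((t₀ - v)^2 + R)/(4*bmax^2)) := by
    have step1 : (∫ b in Set.Ioc (0:ℝ) bmax, F' t₀ b)
        = (-(t₀ - v)/4) * ∫ b in Set.Ioc (0:ℝ) bmax, (2/b) * Real.exp (-c/(4*b^2)) := by
      rw [← MeasureTheory.integral_const_mul]
      refine setIntegral_congr_fun measurableSet_Ioc (fun b hb' => ?_)
      have hb0 : (0:ℝ) < b := hb'.1
      rw [hF']
      have hb0' : b ≠ 0 := ne_of_gt hb0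
      field_simp
      ring
    rw [step1, ← subst_lemma bmax c hb hc]
    show _ = (t₀ - v)/4 * negEi (c/(4*bmax^2))
    unfold negEi
    ring
  exact hval ▸ hder




lemma sum_sq_pos {N : ℕ} {a b : Fin N → ℝ} (h : a ≠ b) : 0 < ∑ k, (a k - b k)^2 := by
  obtain ⟨k, hk⟩ := Function.ne_iff.1 h
  have h0 : a k - b k ≠ 0 := sub_ne_zero.2 hk
  exact Finset.sum_pos' (fun i _ => sq_nonneg _) ⟨k, Finset.mem_univ k, by positivity⟩

lemma split_sum_right {N : ℕ} (xi q : Fin N → ℝ) (η : Fin N) (t : ℝ) :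
    ∑ k, (Function.update xi η t k - q k)^2
      = (t - q η)^2 + ∑ k ∈ Finset.univ.erase η, (xi k - q k)^2 := by
  rw [← Finset.sum_erase_add _ _ (Finset.mem_univ η), Function.update_self, add_comm]
  congr 1
  refine Finset.sum_congr rfl fun k hk => ?_
  rw [Function.update_of_ne (Finset.mem_erase.1 hk).1]

lemma split_sum_left {N : ℕ} (xi q : Fin N → ℝ) (η : Fin N) (t : ℝ) :
    ∑ k, (q k - Function.update xi η t k)^2
      = (t - q η)^2 + ∑ k ∈ Finset.univ.erase η, (xi k - q k)^2 := by
  rw [← split_sum_right xi q η t]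
  exact Finset.sum_congr rfl fun k _ => by ring

lemma split_sum_at {N : ℕ} (xi q : Fin N → ℝ) (η : Fin N) :
    ∑ k, (xi k - q k)^2
      = (xi η - q η)^2 + ∑ k ∈ Finset.univ.erase η, (xi k - q k)^2 := by
  have := split_sum_right xi q η (xi η)
  rwa [Function.update_eq_self] at this

lemma pair_deriv_right {N : ℕ} (bmax : ℝ) (hb : 0 < bmax) (xi q : Fin N → ℝ) (η : Fin N)
    (hne : xi ≠ q) :
    HasDerivAt (fun t => ∫ b in Set.Ioc (0:ℝ) bmax,
        b * Real.exp (-(∑ k, (Function.update xi η t k - q k)^2)/(4*b^2)))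
      ((xi η - q η)/4 * negEi ((∑ k, (xi k - q k)^2)/(4*bmax^2))) (xi η) := by
  have hR : 0 ≤ ∑ k ∈ Finset.univ.erase η, (xi k - q k)^2 :=
    Finset.sum_nonneg fun k _ => sq_nonneg _
  have hc : 0 < (xi η - q η)^2 + ∑ k ∈ Finset.univ.erase η, (xi k - q k)^2 := by
    rw [← split_sum_at]; exact sum_sq_pos hne
  have h := key_hasDerivAt bmax hb (q η) (∑ k ∈ Finset.univ.erase η, (xi k - q k)^2)
    (xi η) hR hc
  have hfe : (fun t => ∫ b in Set.Ioc (0:ℝ) bmax,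
        b * Real.exp (-(∑ k, (Function.update xi η t k - q k)^2)/(4*b^2)))
      = (fun t => ∫ b in Set.Ioc (0:ℝ) bmax,
        b * Real.exp (-((t - q η)^2 + ∑ k ∈ Finset.univ.erase η, (xi k - q k)^2)/(4*b^2))) := by
    funext t
    simp only [split_sum_right]
  rw [hfe, show (∑ k, (xi k - q k)^2) = (xi η - q η)^2
      + ∑ k ∈ Finset.univ.erase η, (xi k - q k)^2 from split_sum_at xi q η]
  exact h

lemma pair_deriv_left {N : ℕ} (bmax : ℝ) (hb : 0 < bmax) (xi q : Fin N → ℝ) (η : Fin N)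
    (hne : xi ≠ q) :
    HasDerivAt (fun t => ∫ b in Set.Ioc (0:ℝ) bmax,
        b * Real.exp (-(∑ k, (q k - Function.update xi η t k)^2)/(4*b^2)))
      ((xi η - q η)/4 * negEi ((∑ k, (xi k - q k)^2)/(4*bmax^2))) (xi η) := by
  have h := pair_deriv_right bmax hb xi q η hne
  have hfe : (fun t => ∫ b in Set.Ioc (0:ℝ) bmax,
        b * Real.exp (-(∑ k, (q k - Function.update xi η t k)^2)/(4*b^2)))
      = (fun t => ∫ b in Set.Ioc (0:ℝ) bmax,
        b * Real.exp (-(∑ k, (Function.update xi η t k - q k)^2)/(4*b^2))) := by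
    funext t
    simp only [split_sum_right, split_sum_left]
  rw [hfe]
  exact h

lemma kernel_integrable (bmax : ℝ) (hb : 0 < bmax) (d : ℝ) (hd : 0 ≤ d) :
    IntegrableOn (fun b : ℝ => b * Real.exp (-d/(4*b^2))) (Set.Ioc 0 bmax) := by
  have hmeas : AEStronglyMeasurable (fun b : ℝ => b * Real.exp (-d/(4*b^2)))
      (volume.restrict (Set.Ioc 0 bmax)) := by
    apply Measurable.aestronglyMeasurable
    exact measurable_id.mul (Real.measurable_exp.comp
      (measurable_const.div ((measurable_id.pow_const 2).const_mul 4)))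
  refine Integrable.mono' (integrable_const bmax) hmeas ?_
  filter_upwards [ae_restrict_mem measurableSet_Ioc] with b hb'
  rw [Real.norm_eq_abs, abs_mul, abs_of_pos hb'.1, abs_of_pos (Real.exp_pos _)]
  calc b * Real.exp (-d/(4*b^2)) ≤ b * 1 := by
        apply mul_le_mul_of_nonneg_left _ hb'.1.le
        apply Real.exp_le_one_iff.2
        have h0 : 0 ≤ d/(4*b^2) := by positivity
        rw [neg_div]
        linarith
    _ ≤ bmax := by rw [mul_one]; exact hb'.2

lemma sqrt_pi_pow (N : ℕ) : (Real.sqrt π)^N = π ^ ((N:ℝ)/2) := by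
  rw [Real.sqrt_eq_rpow, ← Real.rpow_natCast (π ^ ((1:ℝ)/2)) N,
    ← Real.rpow_mul pi_pos.le]
  congr 1
  ring




lemma D_expand (N M L : ℕ) (hN : 1 ≤ N) (bmax : ℝ) (hb : 0 < bmax)
    (y : Fin M → Fin N → ℝ) (wy : Fin M → ℝ) (wx : Fin L → ℝ)
    (x : Fin L → Fin N → ℝ) (ξ : Fin L) (η : Fin N) :
    (fun t : ℝ =>
      ∫ b in Set.Ioc (0:ℝ) bmax, (1 / b ^ (N - 1)) *
        ∫ m : Fin N → ℝ,
          ((∑ i, wy i * ∏ k, Real.exp (-(y i k - m k) ^ 2 / (2 * b ^ 2)))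
            - ∑ i, wx i * ∏ k, Real.exp
                (-((Function.update x ξ (Function.update (x ξ) η t)) i k - m k) ^ 2
                  / (2 * b ^ 2))) ^ 2)
    = (fun t : ℝ =>
        ∑ p : Fin M ⊕ Fin L, ∑ q : Fin M ⊕ Fin L,
          ((Real.sqrt π)^N * (Sum.elim wy (fun j => -wx j) p
              * Sum.elim wy (fun j => -wx j) q)) *
            ∫ b in Set.Ioc (0:ℝ) bmax, b * Real.exp
              (-(∑ k, (Sum.elim y (Function.update x ξ (Function.update (x ξ) η t)) p k
                  - Sum.elim y (Function.update x ξ (Function.update (x ξ) η t)) q k)^2)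
                /(4*b^2))) := by
  funext t
  set cc : Fin M ⊕ Fin L → ℝ := Sum.elim wy (fun j => -wx j) with hcc
  set zz : Fin M ⊕ Fin L → Fin N → ℝ :=
    Sum.elim y (Function.update x ξ (Function.update (x ξ) η t)) with hzz
  have hcong : Set.EqOn
      (fun b : ℝ => (1 / b ^ (N - 1)) *
        ∫ m : Fin N → ℝ,
          ((∑ i, wy i * ∏ k, Real.exp (-(y i k - m k) ^ 2 / (2 * b ^ 2)))
            - ∑ i, wx i * ∏ k, Real.exp
                (-((Function.update x ξ (Function.update (x ξ) η t)) i k - m k) ^ 2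
                  / (2 * b ^ 2))) ^ 2)
      (fun b : ℝ => ∑ p : Fin M ⊕ Fin L, ∑ q : Fin M ⊕ Fin L,
        ((Real.sqrt π)^N * (cc p * cc q)) *
          (b * Real.exp (-(∑ k, (zz p k - zz q k)^2)/(4*b^2))))
      (Set.Ioc 0 bmax) := by
    intro b hb'
    have hb0 : (0:ℝ) < b := hb'.1
    have hdiff : ∀ m : Fin N → ℝ,
        ((∑ i, wy i * ∏ k, Real.exp (-(y i k - m k) ^ 2 / (2 * b ^ 2)))
            - ∑ i, wx i * ∏ k, Real.exp
                (-((Function.update x ξ (Function.update (x ξ) η t)) i k - m k) ^ 2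
                  / (2 * b ^ 2)))
        = ∑ p : Fin M ⊕ Fin L, cc p * ∏ k, Real.exp (-(zz p k - m k)^2/(2*b^2)) := by
      intro m
      rw [Fintype.sum_sum_type]
      simp only [hcc, hzz, Sum.elim_inl, Sum.elim_inr, neg_mul]
      rw [Finset.sum_neg_distrib, sub_eq_add_neg]
    show (1 / b ^ (N - 1)) * ∫ m : Fin N → ℝ, _ = _
    have hIeq : (∫ m : Fin N → ℝ,
        ((∑ i, wy i * ∏ k, Real.exp (-(y i k - m k) ^ 2 / (2 * b ^ 2)))
            - ∑ i, wx i * ∏ k, Real.exp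
                (-((Function.update x ξ (Function.update (x ξ) η t)) i k - m k) ^ 2
                  / (2 * b ^ 2))) ^ 2)
        = ∫ m : Fin N → ℝ,
          (∑ p : Fin M ⊕ Fin L, cc p * ∏ k, Real.exp (-(zz p k - m k)^2/(2*b^2)))^2 := by
      congr 1
      funext m
      rw [hdiff m]
    rw [hIeq, inner_integral N b hb0 cc zz, Finset.mul_sum]
    refine Finset.sum_congr rfl fun p _ => ?_
    rw [Finset.mul_sum]
    refine Finset.sum_congr rfl fun q _ => ?_
    have hbN : (b:ℝ)^N = b^(N-1) * b := by
      conv_lhs => rw [show N = (N-1)+1 from (Nat.succ_pred_eq_of_pos hN).symm]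
      rw [pow_succ]
    have h1 : (b:ℝ)^(N-1) ≠ 0 := pow_ne_zero _ (ne_of_gt hb0)
    rw [mul_pow, hbN]
    field_simp
  rw [setIntegral_congr_fun measurableSet_Ioc hcong]
  rw [integral_finset_sum]
  · refine Finset.sum_congr rfl fun p _ => ?_
    rw [integral_finset_sum]
    · refine Finset.sum_congr rfl fun q _ => ?_
      rw [MeasureTheory.integral_const_mul]
    · intro q _
      exact ((kernel_integrable bmax hb _
        (Finset.sum_nonneg fun k _ => sq_nonneg _)).const_mul _)
  · intro p _
    exact integrable_finset_sum _ (fun q _ =>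
      ((kernel_integrable bmax hb _
        (Finset.sum_nonneg fun k _ => sq_nonneg _)).const_mul _))





noncomputable def derAux (N M L : ℕ) (bmax : ℝ) (wy : Fin M → ℝ) (wx : Fin L → ℝ)
    (y : Fin M → Fin N → ℝ) (x : Fin L → Fin N → ℝ) (ξ : Fin L) (η : Fin N)
    (p q : Fin M ⊕ Fin L) : ℝ :=
  (if p = Sum.inr ξ then
     (Real.sqrt π)^N * (Sum.elim wy (fun j => -wx j) p * Sum.elim wy (fun j => -wx j) q) *
       ((x ξ η - Sum.elim y x q η)/4
         * negEi ((∑ k, (x ξ k - Sum.elim y x q k)^2)/(4*bmax^2)))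
   else 0)
  + (if q = Sum.inr ξ then
     (Real.sqrt π)^N * (Sum.elim wy (fun j => -wx j) q * Sum.elim wy (fun j => -wx j) p) *
       ((x ξ η - Sum.elim y x p η)/4
         * negEi ((∑ k, (x ξ k - Sum.elim y x p k)^2)/(4*bmax^2)))
   else 0)

lemma hpair_lemma (N M L : ℕ) (bmax : ℝ) (hb : 0 < bmax)
    (y : Fin M → Fin N → ℝ) (wy : Fin M → ℝ) (wx : Fin L → ℝ)
    (x : Fin L → Fin N → ℝ) (ξ : Fin L) (η : Fin N)
    (hxy : ∀ i, x ξ ≠ y i) (hxx : ∀ i, i ≠ ξ → x ξ ≠ x i)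
    (p q : Fin M ⊕ Fin L) :
    HasDerivAt (fun t : ℝ =>
        ((Real.sqrt π)^N * (Sum.elim wy (fun j => -wx j) p
            * Sum.elim wy (fun j => -wx j) q)) *
          ∫ b in Set.Ioc (0:ℝ) bmax, b * Real.exp
            (-(∑ k, (Sum.elim y (Function.update x ξ (Function.update (x ξ) η t)) p k
                - Sum.elim y (Function.update x ξ (Function.update (x ξ) η t)) q k)^2)
              /(4*b^2)))
      (derAux N M L bmax wy wx y x ξ η p q) (x ξ η) := by
  have hZne : ∀ r : Fin M ⊕ Fin L, r ≠ Sum.inr ξ → ∀ t : ℝ,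
      Sum.elim y (Function.update x ξ (Function.update (x ξ) η t)) r = Sum.elim y x r := by
    rintro (a | j) hr t
    · rfl
    · have hj : j ≠ ξ := fun h => hr (by rw [h])
      simp only [Sum.elim_inr]
      exact Function.update_of_ne hj _ _
  have hne' : ∀ r : Fin M ⊕ Fin L, r ≠ Sum.inr ξ → x ξ ≠ Sum.elim y x r := by
    rintro (a | j) hr
    · exact hxy a
    · exact hxx j (fun h => hr (by rw [h]))
  by_cases hp : p = Sum.inr ξ <;> by_cases hq : q = Sum.inr ξ
  · -- both are the moving point: constant function, zero derivative
    subst hp; subst hq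
    have hfun0 : (fun t : ℝ =>
        ((Real.sqrt π)^N * (Sum.elim wy (fun j => -wx j) (Sum.inr ξ)
            * Sum.elim wy (fun j => -wx j) (Sum.inr ξ))) *
          ∫ b in Set.Ioc (0:ℝ) bmax, b * Real.exp
            (-(∑ k, (Sum.elim y (Function.update x ξ (Function.update (x ξ) η t)) (Sum.inr ξ) k
                - Sum.elim y (Function.update x ξ (Function.update (x ξ) η t)) (Sum.inr ξ) k)^2)
              /(4*b^2)))
        = (fun _ : ℝ =>
        ((Real.sqrt π)^N * (Sum.elim wy (fun j => -wx j) (Sum.inr ξ)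
            * Sum.elim wy (fun j => -wx j) (Sum.inr ξ))) *
          ∫ b in Set.Ioc (0:ℝ) bmax, b * Real.exp (-(0:ℝ)/(4*b^2))) := by
      funext t
      simp
    rw [hfun0]
    have h0 : derAux N M L bmax wy wx y x ξ η (Sum.inr ξ) (Sum.inr ξ) = 0 := by
      simp [derAux]
    rw [h0]
    exact hasDerivAt_const _ _
  · -- p = inr ξ, q fixed
    subst hp
    have hfun1 : (fun t : ℝ =>
        ((Real.sqrt π)^N * (Sum.elim wy (fun j => -wx j) (Sum.inr ξ)
            * Sum.elim wy (fun j => -wx j) q)) *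
          ∫ b in Set.Ioc (0:ℝ) bmax, b * Real.exp
            (-(∑ k, (Sum.elim y (Function.update x ξ (Function.update (x ξ) η t)) (Sum.inr ξ) k
                - Sum.elim y (Function.update x ξ (Function.update (x ξ) η t)) q k)^2)
              /(4*b^2)))
        = (fun t : ℝ =>
        ((Real.sqrt π)^N * (Sum.elim wy (fun j => -wx j) (Sum.inr ξ)
            * Sum.elim wy (fun j => -wx j) q)) *
          ∫ b in Set.Ioc (0:ℝ) bmax, b * Real.exp
            (-(∑ k, (Function.update (x ξ) η t k - Sum.elim y x q k)^2)/(4*b^2))) := by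
      funext t
      simp only [hZne q hq, Sum.elim_inr, Function.update_self]
    rw [hfun1]
    have h := (pair_deriv_right bmax hb (x ξ) (Sum.elim y x q) η (hne' q hq)).const_mul
      ((Real.sqrt π)^N * (Sum.elim wy (fun j => -wx j) (Sum.inr ξ)
            * Sum.elim wy (fun j => -wx j) q))
    refine h.congr_deriv ?_
    simp [derAux, hq]
  · -- q = inr ξ, p fixed
    subst hq
    have hfun2 : (fun t : ℝ =>
        ((Real.sqrt π)^N * (Sum.elim wy (fun j => -wx j) p
            * Sum.elim wy (fun j => -wx j) (Sum.inr ξ))) *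
          ∫ b in Set.Ioc (0:ℝ) bmax, b * Real.exp
            (-(∑ k, (Sum.elim y (Function.update x ξ (Function.update (x ξ) η t)) p k
                - Sum.elim y (Function.update x ξ (Function.update (x ξ) η t)) (Sum.inr ξ) k)^2)
              /(4*b^2)))
        = (fun t : ℝ =>
        ((Real.sqrt π)^N * (Sum.elim wy (fun j => -wx j) p
            * Sum.elim wy (fun j => -wx j) (Sum.inr ξ))) *
          ∫ b in Set.Ioc (0:ℝ) bmax, b * Real.exp
            (-(∑ k, (Sum.elim y x p k - Function.update (x ξ) η t k)^2)/(4*b^2))) := by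
      funext t
      simp only [hZne p hp, Sum.elim_inr, Function.update_self]
    rw [hfun2]
    have h := (pair_deriv_left bmax hb (x ξ) (Sum.elim y x p) η (hne' p hp)).const_mul
      ((Real.sqrt π)^N * (Sum.elim wy (fun j => -wx j) p
            * Sum.elim wy (fun j => -wx j) (Sum.inr ξ)))
    refine h.congr_deriv ?_
    unfold derAux
    rw [if_neg hp, if_pos rfl, zero_add]
    ring
  · -- neither moves: constant
    have hfun3 : (fun t : ℝ =>
        ((Real.sqrt π)^N * (Sum.elim wy (fun j => -wx j) p
            * Sum.elim wy (fun j => -wx j) q)) *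
          ∫ b in Set.Ioc (0:ℝ) bmax, b * Real.exp
            (-(∑ k, (Sum.elim y (Function.update x ξ (Function.update (x ξ) η t)) p k
                - Sum.elim y (Function.update x ξ (Function.update (x ξ) η t)) q k)^2)
              /(4*b^2)))
        = (fun _ : ℝ =>
        ((Real.sqrt π)^N * (Sum.elim wy (fun j => -wx j) p
            * Sum.elim wy (fun j => -wx j) q)) *
          ∫ b in Set.Ioc (0:ℝ) bmax, b * Real.exp
            (-(∑ k, (Sum.elim y x p k - Sum.elim y x q k)^2)/(4*b^2))) := by
      funext t
      simp only [hZne p hp, hZne q hq]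
    rw [hfun3]
    have h0 : derAux N M L bmax wy wx y x ξ η p q = 0 := by
      simp [derAux, if_neg hp, if_neg hq]
    rw [h0]
    exact hasDerivAt_const _ _

lemma der_sum (N M L : ℕ) (bmax : ℝ) (wy : Fin M → ℝ) (wx : Fin L → ℝ)
    (y : Fin M → Fin N → ℝ) (x : Fin L → Fin N → ℝ) (ξ : Fin L) (η : Fin N) :
    ∑ p : Fin M ⊕ Fin L, ∑ q : Fin M ⊕ Fin L, derAux N M L bmax wy wx y x ξ η p q
      = Real.pi ^ ((N : ℝ) / 2) / 2 * wx ξ *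
        ((∑ i, wx i * (x ξ η - x i η) * negEi ((∑ k, (x ξ k - x i k) ^ 2) / (4 * bmax ^ 2)))
          - ∑ i, wy i * (x ξ η - y i η) * negEi ((∑ k, (x ξ k - y i k) ^ 2) / (4 * bmax ^ 2))) := by
  rw [← sqrt_pi_pow N]
  unfold derAux
  rw [Finset.sum_congr rfl (fun p _ => Finset.sum_add_distrib)]
  rw [Finset.sum_add_distrib]
  have h1 : ∑ p : Fin M ⊕ Fin L, ∑ q : Fin M ⊕ Fin L,
      (if p = Sum.inr ξ then
        (Real.sqrt π)^N * (Sum.elim wy (fun j => -wx j) p * Sum.elim wy (fun j => -wx j) q) *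
          ((x ξ η - Sum.elim y x q η)/4
            * negEi ((∑ k, (x ξ k - Sum.elim y x q k)^2)/(4*bmax^2)))
       else 0)
      = ∑ q : Fin M ⊕ Fin L,
        (Real.sqrt π)^N * (Sum.elim wy (fun j => -wx j) (Sum.inr ξ)
            * Sum.elim wy (fun j => -wx j) q) *
          ((x ξ η - Sum.elim y x q η)/4
            * negEi ((∑ k, (x ξ k - Sum.elim y x q k)^2)/(4*bmax^2))) := by
    rw [Finset.sum_comm]
    refine Finset.sum_congr rfl fun q _ => ?_
    simp [Finset.sum_ite_eq']
  have h2 : ∑ p : Fin M ⊕ Fin L, ∑ q : Fin M ⊕ Fin L,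
      (if q = Sum.inr ξ then
        (Real.sqrt π)^N * (Sum.elim wy (fun j => -wx j) q * Sum.elim wy (fun j => -wx j) p) *
          ((x ξ η - Sum.elim y x p η)/4
            * negEi ((∑ k, (x ξ k - Sum.elim y x p k)^2)/(4*bmax^2)))
       else 0)
      = ∑ p : Fin M ⊕ Fin L,
        (Real.sqrt π)^N * (Sum.elim wy (fun j => -wx j) (Sum.inr ξ)
            * Sum.elim wy (fun j => -wx j) p) *
          ((x ξ η - Sum.elim y x p η)/4
            * negEi ((∑ k, (x ξ k - Sum.elim y x p k)^2)/(4*bmax^2))) := by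
    refine Finset.sum_congr rfl fun p _ => ?_
    simp [Finset.sum_ite_eq']
  rw [h1, h2, ← two_mul]
  rw [Fintype.sum_sum_type]
  simp only [Sum.elim_inl, Sum.elim_inr]
  rw [mul_add, Finset.mul_sum, Finset.mul_sum]
  rw [mul_sub, Finset.mul_sum, Finset.mul_sum, sub_eq_add_neg, ← Finset.sum_neg_distrib]
  rw [add_comm]
  congr 1
  · exact Finset.sum_congr rfl fun j _ => by ring
  · exact Finset.sum_congr rfl fun i _ => by ring

theorem distance_exact_partial_derivative
    (N M L : ℕ) (hN : 1 ≤ N) (bmax : ℝ) (hb : 0 < bmax)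
    (y : Fin M → Fin N → ℝ) (wy : Fin M → ℝ) (hwy : ∀ i, 0 < wy i)
    (wx : Fin L → ℝ) (hwx : ∀ i, 0 < wx i)
    (x : Fin L → Fin N → ℝ)
    (ξ : Fin L) (η : Fin N)
    (hxy : ∀ i, x ξ ≠ y i) (hxx : ∀ i, i ≠ ξ → x ξ ≠ x i) :
    HasDerivAt (fun t : ℝ =>
      ∫ b in Set.Ioc (0:ℝ) bmax, (1 / b ^ (N - 1)) *
        ∫ m : Fin N → ℝ,
          ((∑ i, wy i * ∏ k, Real.exp (-(y i k - m k) ^ 2 / (2 * b ^ 2)))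
            - ∑ i, wx i * ∏ k, Real.exp
                (-((Function.update x ξ (Function.update (x ξ) η t)) i k - m k) ^ 2
                  / (2 * b ^ 2))) ^ 2)
      (Real.pi ^ ((N : ℝ) / 2) / 2 * wx ξ *
        ((∑ i, wx i * (x ξ η - x i η) * negEi ((∑ k, (x ξ k - x i k) ^ 2) / (4 * bmax ^ 2)))
          - ∑ i, wy i * (x ξ η - y i η) * negEi ((∑ k, (x ξ k - y i k) ^ 2) / (4 * bmax ^ 2))))
      (x ξ η) := by
  rw [D_expand N M L hN bmax hb y wy wx x ξ η,
    ← der_sum N M L bmax wy wx y x ξ η]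
  exact HasDerivAt.fun_sum fun p _ => HasDerivAt.fun_sum fun q _ =>
    hpair_lemma N M L bmax hb y wy wx x ξ η hxy hxx p q
end
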